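/- arXiv:1907.02352 — 5 statements merged into one kernel-verified Lean document; each statement's English description precedes it below -/
import Mathlib

section
/- Let (S_t)_{t≥0} be a C₀-semigroup on a Banach space X with infinitesimal generator A. Then the following statements are equivalent: (1) the semigroup is norm continuous, i.e., lim_{t→0+} ‖S_t − Id‖ = 0 in operator norm; (2) A is a continuous (bounded) linear operator; (3) the domain of A equals all of X, i.e., for every x ∈ X the limit lim_{t→0+} (S_t x − x)/t exists. If these conditions hold, then S_t = e^{tA} := Σ_{n=0}^∞ (tⁿ/n!) Aⁿ for all t ≥ 0. -/
open Filter Topology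

section SemigroupAux

open Set MeasureTheory intervalIntegral

noncomputable instance semigroupProofTower {X : Type*} [NormedAddCommGroup X] [NormedSpace ℝ X] :
    IsScalarTower ℝ (X →L[ℝ] X) (X →L[ℝ] X) := IsScalarTower.right

variable {E : Type*} [NormedAddCommGroup E] [NormedSpace ℝ E]

/-- map h ↦ c + h sends 𝓝[>]0 to 𝓝[>]c -/
lemma tendsto_add_right_nhdsGT (c : ℝ) :
    Tendsto (fun h : ℝ => c + h) (𝓝[>] (0:ℝ)) (𝓝[>] c) := by
  rw [tendsto_nhdsWithin_iff]
  constructor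
  · have := ((continuous_add_left c).tendsto 0).mono_left (nhdsWithin_le_nhds (s := Ioi (0:ℝ)))
    simpa using this
  · filter_upwards [self_mem_nhdsWithin] with h hh
    exact lt_add_of_pos_right c hh

lemma tendsto_sub_left_nhdsGT (c : ℝ) :
    Tendsto (fun u : ℝ => u - c) (𝓝[Ioi c] c) (𝓝[>] (0:ℝ)) := by
  rw [tendsto_nhdsWithin_iff]
  constructor
  · have := ((continuous_sub_right c).tendsto c).mono_left (nhdsWithin_le_nhds (s := Ioi c))
    simpa using this
  · filter_upwards [self_mem_nhdsWithin] with u hu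
    exact sub_pos.2 (show c < u from hu)

/-- right FTC limit -/
lemma ftc_right [CompleteSpace E] {f : ℝ → E} {b c : ℝ}
    (hf : ContinuousOn f (Icc 0 b)) (hc0 : 0 ≤ c) (hcb : c < b) :
    Tendsto (fun h : ℝ => h⁻¹ • ∫ s in c..c+h, f s) (𝓝[>] (0:ℝ)) (𝓝 (f c)) := by
  have hmemb : Icc 0 b ∈ 𝓝[Ioi c] c := by
    rw [mem_nhdsWithin]
    exact ⟨Iio b, isOpen_Iio, hcb, fun x hx => ⟨le_trans hc0 (le_of_lt hx.2), le_of_lt hx.1⟩⟩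
  have hmeas : StronglyMeasurableAtFilter f (𝓝[Ioi c] c) volume :=
    ⟨Icc 0 b, hmemb, (hf.mono Subset.rfl).aestronglyMeasurable measurableSet_Icc⟩
  have hcw : ContinuousWithinAt f (Ioi c) c :=
    (hf c ⟨hc0, le_of_lt hcb⟩).mono_of_mem_nhdsWithin hmemb
  have hint : IntervalIntegrable f volume c c := IntervalIntegrable.refl
  have hD : HasDerivWithinAt (fun u => ∫ x in c..u, f x) (f c) (Ici c) c :=
    integral_hasDerivWithinAt_right hint hmeas hcw
  have hslope : Tendsto (slope (fun u => ∫ x in c..u, f x) c) (𝓝[Ioi c] c) (𝓝 (f c)) := by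
    have := hasDerivWithinAt_iff_tendsto_slope.1 hD
    rwa [Ici_sdiff_left] at this
  have := hslope.comp (tendsto_add_right_nhdsGT c)
  refine this.congr fun h => ?_
  simp [Function.comp, slope_def_module, intervalIntegral.integral_same]

/-- continuity on `Icc 0 b` from a modulus -/
lemma gen_contOn {f : ℝ → E} {g : ℝ → ℝ} {b M : ℝ} (hM : 0 < M)
    (hmod : ∀ u v : ℝ, 0 ≤ u → u < v → v ≤ b → ‖f v - f u‖ ≤ M * g (v - u))
    (hg : Tendsto g (𝓝[>] (0:ℝ)) (𝓝 0)) :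
    ContinuousOn f (Icc 0 b) := by
  rw [Metric.continuousOn_iff]
  intro u hu ε hε
  have hev : ∀ᶠ h in 𝓝[>] (0:ℝ), g h < ε / M :=
    hg.eventually (gt_mem_nhds (div_pos hε hM))
  obtain ⟨η, hη, hsub⟩ := mem_nhdsGT_iff_exists_Ioc_subset.1 hev
  refine ⟨η, hη, fun v hv hdist => ?_⟩
  rcases lt_trichotomy u v with h | h | h
  · have h1 : ‖f v - f u‖ ≤ M * g (v - u) := hmod u v hu.1 h hv.2
    have h2 : g (v - u) < ε / M := hsub ⟨sub_pos.2 h, by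
      rw [dist_eq_norm] at hdist
      have := le_of_lt hdist
      calc v - u ≤ |v - u| := le_abs_self _
        _ ≤ η := by rwa [← Real.norm_eq_abs]⟩
    rw [dist_eq_norm]
    calc ‖f v - f u‖ ≤ M * g (v - u) := h1
      _ < M * (ε / M) := by exact (mul_lt_mul_iff_right₀ hM).2 h2
      _ = ε := by field_simp
  · simp [h, hε]
  · have h1 : ‖f u - f v‖ ≤ M * g (u - v) := hmod v u hv.1 h hu.2
    have h2 : g (u - v) < ε / M := hsub ⟨sub_pos.2 h, by
      rw [dist_eq_norm] at hdist
      have := le_of_lt hdist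
      calc u - v ≤ |u - v| := le_abs_self _
        _ = |v - u| := abs_sub_comm _ _
        _ ≤ η := by rwa [← Real.norm_eq_abs]⟩
    rw [dist_eq_norm, norm_sub_rev]
    calc ‖f u - f v‖ ≤ M * g (u - v) := h1
      _ < M * (ε / M) := (mul_lt_mul_iff_right₀ hM).2 h2
      _ = ε := by field_simp

/-- shifting identity -/
lemma shift_sub_integral [CompleteSpace E] {f : ℝ → E} (L : E →L[ℝ] E) {τ h : ℝ}
    (hτ : 0 ≤ τ) (hh : 0 ≤ h) (hcont : ContinuousOn f (Icc 0 (τ + h)))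
    (hcomm : ∀ s ∈ Icc (0:ℝ) τ, L (f s) = f (s + h)) :
    L (∫ s in (0:ℝ)..τ, f s) - ∫ s in (0:ℝ)..τ, f s
      = (∫ s in τ..(τ+h), f s) - ∫ s in (0:ℝ)..h, f s := by
  have hint : ∀ a b : ℝ, a ∈ Icc 0 (τ+h) → b ∈ Icc 0 (τ+h) → IntervalIntegrable f volume a b :=
    fun a b ha hb => (hcont.mono (uIcc_subset_Icc ha hb)).intervalIntegrable
  have h0 : (0:ℝ) ∈ Icc (0:ℝ) (τ+h) := ⟨le_refl _, by linarith⟩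
  have hτm : τ ∈ Icc (0:ℝ) (τ+h) := ⟨hτ, by linarith⟩
  have hhm : h ∈ Icc (0:ℝ) (τ+h) := ⟨hh, by linarith⟩
  have hτhm : τ + h ∈ Icc (0:ℝ) (τ+h) := ⟨by linarith, le_refl _⟩
  have step1 : L (∫ s in (0:ℝ)..τ, f s) = ∫ s in (0:ℝ)..τ, L (f s) :=
    (L.intervalIntegral_comp_comm (hint 0 τ h0 hτm)).symm
  have step2 : ∫ s in (0:ℝ)..τ, L (f s) = ∫ s in (0:ℝ)..τ, f (s + h) := by
    refine intervalIntegral.integral_congr fun s hs => ?_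
    rw [uIcc_of_le hτ] at hs
    exact hcomm s hs
  have step3 : (∫ s in (0:ℝ)..τ, f (s + h)) = ∫ s in h..(τ+h), f s := by
    rw [integral_comp_add_right, zero_add]
  have e1 : (∫ s in (0:ℝ)..h, f s) + ∫ s in h..(τ+h), f s = ∫ s in (0:ℝ)..(τ+h), f s :=
    integral_add_adjacent_intervals (hint 0 h h0 hhm) (hint h (τ+h) hhm hτhm)
  have e2 : (∫ s in (0:ℝ)..τ, f s) + ∫ s in τ..(τ+h), f s = ∫ s in (0:ℝ)..(τ+h), f s :=
    integral_add_adjacent_intervals (hint 0 τ h0 hτm) (hint τ (τ+h) hτm hτhm)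
  rw [step1, step2, step3]
  have := e1.trans e2.symm
  abel_nf
  abel_nf at this
  linear_combination (norm := abel_nf) this

/-- combined limit -/
lemma core_tendsto [CompleteSpace E] {f : ℝ → E} {τ b : ℝ}
    (hτ : 0 ≤ τ) (hb : τ < b) (hcont : ContinuousOn f (Icc 0 b)) :
    Tendsto (fun h : ℝ => h⁻¹ • ((∫ s in τ..(τ+h), f s) - ∫ s in (0:ℝ)..h, f s))
      (𝓝[>] (0:ℝ)) (𝓝 (f τ - f 0)) := by
  have h1 := ftc_right hcont hτ hb
  have h2 := ftc_right hcont (le_refl 0) (lt_of_le_of_lt hτ hb)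
  have := h1.sub (by simpa using h2)
  exact this.congr fun h => (smul_sub _ _ _).symm

section Semigroup
variable {X : Type*} [NormedAddCommGroup X] [NormedSpace ℝ X] [CompleteSpace X]
variable {S : ℝ → X →L[ℝ] X}


lemma locBound (hS0 : S 0 = ContinuousLinearMap.id ℝ X)
    (hScont : ∀ x : X, Tendsto (fun t : ℝ => S t x) (𝓝[>] (0:ℝ)) (𝓝 x)) :
    ∃ δ : ℝ, 0 < δ ∧ ∃ M : ℝ, 1 ≤ M ∧ ∀ u ∈ Icc (0:ℝ) δ, ‖S u‖ ≤ M := by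
  by_contra hcon
  push_neg at hcon
  have hsel : ∀ n : ℕ, ∃ u ∈ Icc (0:ℝ) (1/(n+1)), max (n:ℝ) 1 < ‖S u‖ := by
    intro n
    obtain ⟨u, hu, hlt⟩ := hcon (1/(n+1)) (by positivity) (max (n:ℝ) 1) (le_max_right _ _)
    exact ⟨u, hu, hlt⟩
  choose t ht hlt using hsel
  have htend : ∀ x : X, Tendsto (fun n => S (t n) x) atTop (𝓝 x) := by
    intro x
    rw [Metric.tendsto_atTop]
    intro ε hε
    have hev : ∀ᶠ s in 𝓝[>] (0:ℝ), dist (S s x) x < ε :=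
      (hScont x).eventually (Metric.ball_mem_nhds x hε)
    obtain ⟨η, hη, hsub⟩ := mem_nhdsGT_iff_exists_Ioc_subset.1 hev
    obtain ⟨N, hN⟩ := exists_nat_gt (1/η)
    refine ⟨N, fun n hn => ?_⟩
    rcases eq_or_lt_of_le (ht n).1 with h0 | h0
    · simp [← h0, hS0, hε]
    · refine hsub ⟨h0, ?_⟩
      have h1 : (1:ℝ)/(n+1) ≤ 1/(N+1) := by
        apply one_div_le_one_div_of_le (by positivity)
        exact_mod_cast by omega
      have h2 : (1:ℝ)/(N+1) ≤ η := by
        rw [div_le_iff₀ (by positivity)]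
        have : 1/η < N := hN
        rw [div_lt_iff₀ hη] at this
        nlinarith
      exact le_trans (ht n).2 (le_trans h1 h2)
  have hbd : ∀ x : X, ∃ C, ∀ n : ℕ, ‖S (t n) x‖ ≤ C := by
    intro x
    obtain ⟨C, hC⟩ := ((htend x).norm.bddAbove_range)
    exact ⟨C, fun n => hC ⟨n, rfl⟩⟩
  obtain ⟨C', hC'⟩ := banach_steinhaus hbd
  obtain ⟨n, hn⟩ := exists_nat_gt C'
  have : (n:ℝ) < ‖S (t n)‖ := lt_of_le_of_lt (le_max_left _ _) (hlt n)
  have h2 : ‖S (t n)‖ ≤ C' := hC' n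
  linarith

lemma globBound (hS0 : S 0 = ContinuousLinearMap.id ℝ X)
    (hSadd : ∀ s t : ℝ, 0 ≤ s → 0 ≤ t → S (s + t) = (S s).comp (S t))
    (hScont : ∀ x : X, Tendsto (fun t : ℝ => S t x) (𝓝[>] (0:ℝ)) (𝓝 x)) :
    ∀ b : ℝ, ∃ M : ℝ, 1 ≤ M ∧ ∀ u ∈ Icc (0:ℝ) b, ‖S u‖ ≤ M := by
  obtain ⟨δ, hδ, M, hM1, hM⟩ := locBound hS0 hScont
  have key : ∀ n : ℕ, ∀ u ∈ Icc (0:ℝ) (n * δ), ‖S u‖ ≤ M ^ n := by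
    intro n
    induction n with
    | zero =>
      intro u hu
      simp only [Nat.cast_zero, zero_mul] at hu
      have : u = 0 := le_antisymm hu.2 hu.1
      simp [this, hS0, pow_zero, ContinuousLinearMap.norm_id_le]
    | succ n ih =>
      intro u hu
      rcases le_or_gt u (n * δ) with h | h
      · calc ‖S u‖ ≤ M ^ n := ih u ⟨hu.1, h⟩
          _ ≤ M ^ (n+1) := pow_le_pow_right₀ hM1 (Nat.le_succ n)
      · have hnδ : (0:ℝ) ≤ n * δ := by positivity
        have hud : u - n * δ ∈ Icc (0:ℝ) δ := by
          constructor
          · linarith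
          · have : (↑(n+1) : ℝ) * δ = n * δ + δ := by push_cast; ring
            have h2 := hu.2
            rw [this] at h2
            linarith
        have heq : S u = (S (u - n * δ)).comp (S (n * δ)) := by
          have := hSadd (u - n * δ) (n * δ) hud.1 hnδ
          rwa [sub_add_cancel] at this
        calc ‖S u‖ ≤ ‖S (u - n * δ)‖ * ‖S (n * δ)‖ := by
              rw [heq]; exact ContinuousLinearMap.opNorm_comp_le _ _
          _ ≤ M * M ^ n := by
              apply mul_le_mul (hM _ hud) (ih _ ⟨hnδ, le_refl _⟩) (norm_nonneg _)
              exact le_trans zero_le_one hM1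
          _ = M ^ (n+1) := by ring
  intro b
  obtain ⟨n, hn⟩ : ∃ n : ℕ, b ≤ n * δ := by
    obtain ⟨n, hn⟩ := exists_nat_gt (b / δ)
    exact ⟨n, by rw [← div_le_iff₀ hδ] at *; exact le_of_lt hn⟩
  exact ⟨M ^ n, one_le_pow₀ hM1, fun u hu => key n u ⟨hu.1, le_trans hu.2 hn⟩⟩

lemma opContOn (hS0 : S 0 = ContinuousLinearMap.id ℝ X)
    (hSadd : ∀ s t : ℝ, 0 ≤ s → 0 ≤ t → S (s + t) = (S s).comp (S t))
    (hScont : ∀ x : X, Tendsto (fun t : ℝ => S t x) (𝓝[>] (0:ℝ)) (𝓝 x))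
    (h1 : Tendsto (fun t : ℝ => ‖S t - 1‖) (𝓝[>] (0:ℝ)) (𝓝 0)) (b : ℝ) :
    ContinuousOn S (Icc 0 b) := by
  obtain ⟨M, hM1, hM⟩ := globBound hS0 hSadd hScont b
  refine gen_contOn (lt_of_lt_of_le zero_lt_one hM1) (fun u v hu huv hvb => ?_) h1
  have heq : S v = S u * S (v - u) := by
    have := hSadd u (v - u) hu (by linarith)
    rw [add_sub_cancel] at this
    exact this
  have : S v - S u = S u * (S (v - u) - 1) := by rw [heq, mul_sub, mul_one]
  rw [this]
  calc ‖S u * (S (v - u) - 1)‖ ≤ ‖S u‖ * ‖S (v - u) - 1‖ := norm_mul_le _ _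
    _ ≤ M * ‖S (v - u) - 1‖ := by
        apply mul_le_mul_of_nonneg_right (hM u ⟨hu, by linarith⟩) (norm_nonneg _)

lemma ptContOn
    (hSadd : ∀ s t : ℝ, 0 ≤ s → 0 ≤ t → S (s + t) = (S s).comp (S t))
    (hScont : ∀ x : X, Tendsto (fun t : ℝ => S t x) (𝓝[>] (0:ℝ)) (𝓝 x))
    {b M : ℝ} (hM1 : 1 ≤ M) (hM : ∀ u ∈ Icc (0:ℝ) b, ‖S u‖ ≤ M) (x : X) :
    ContinuousOn (fun u => S u x) (Icc 0 b) := by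
  refine gen_contOn (g := fun t => ‖S t x - x‖) (lt_of_lt_of_le zero_lt_one hM1)
    (fun u v hu huv hvb => ?_) (tendsto_iff_norm_sub_tendsto_zero.1 (hScont x))
  have heq : S v x = S u (S (v - u) x) := by
    have := hSadd u (v - u) hu (by linarith)
    rw [add_sub_cancel] at this
    rw [this]; rfl
  rw [heq, show S u (S (v-u) x) - S u x = S u (S (v-u) x - x) from (map_sub _ _ _).symm]
  calc ‖S u (S (v-u) x - x)‖ ≤ ‖S u‖ * ‖S (v-u) x - x‖ := (S u).le_opNorm _
    _ ≤ M * ‖S (v-u) x - x‖ :=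
        mul_le_mul_of_nonneg_right (hM u ⟨hu, by linarith⟩) (norm_nonneg _)

lemma core (hS0 : S 0 = ContinuousLinearMap.id ℝ X)
    (hSadd : ∀ s t : ℝ, 0 ≤ s → 0 ≤ t → S (s + t) = (S s).comp (S t))
    (hScont : ∀ x : X, Tendsto (fun t : ℝ => S t x) (𝓝[>] (0:ℝ)) (𝓝 x))
    (h1 : Tendsto (fun t : ℝ => ‖S t - 1‖) (𝓝[>] (0:ℝ)) (𝓝 0)) :
    ∃ A : X →L[ℝ] X, Tendsto (fun t : ℝ => t⁻¹ • (S t - 1)) (𝓝[>] (0:ℝ)) (𝓝 A) ∧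
      ∀ t : ℝ, 0 ≤ t → S t = NormedSpace.exp (t • A) := by
  have hS0' : S 0 = 1 := by rw [hS0, ContinuousLinearMap.one_def]
  have mulid : ∀ f g : X →L[ℝ] X, f.comp g = f * g := fun _ _ => rfl
  -- choose δ
  have hev : ∀ᶠ t in 𝓝[>] (0:ℝ), ‖S t - 1‖ < 1/2 := h1.eventually (gt_mem_nhds (by norm_num))
  obtain ⟨δ, hδpos, hδ⟩ := mem_nhdsGT_iff_exists_Ioc_subset.1 hev
  rw [mem_Ioi] at hδpos
  obtain ⟨τ, hτdef⟩ : ∃ τ : ℝ, τ = δ/2 := ⟨_, rfl⟩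
  have hτpos : 0 < τ := by rw [hτdef]; positivity
  have hτδ : τ < δ := by rw [hτdef]; linarith
  have hcont : ContinuousOn S (Icc 0 δ) := opContOn hS0 hSadd hScont h1 δ
  obtain ⟨B, hBdef⟩ : ∃ B : X →L[ℝ] X, B = ∫ s in (0:ℝ)..τ, S s := ⟨_, rfl⟩
  have hiS : ∀ a b : ℝ, 0 ≤ a → b ≤ δ → a ≤ b → IntervalIntegrable S volume a b := by
    intro a b ha hb hab
    exact (hcont.mono ((uIcc_of_le hab).le.trans (Icc_subset_Icc ha hb))).intervalIntegrable
  -- B is close to τ • 1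
  have hBnorm : ‖(1 : X →L[ℝ] X) - τ⁻¹ • B‖ < 1 := by
    have hint1 : IntervalIntegrable S volume 0 τ := hiS 0 τ le_rfl hτδ.le hτpos.le
    have hintc : IntervalIntegrable (fun _ : ℝ => (1 : X →L[ℝ] X)) volume 0 τ :=
      intervalIntegrable_const
    have hsub : (∫ s in (0:ℝ)..τ, (S s - 1)) = B - τ • 1 := by
      rw [intervalIntegral.integral_sub hint1 hintc, intervalIntegral.integral_const, sub_zero,
        hBdef]
    have hbound : ‖∫ s in (0:ℝ)..τ, (S s - 1)‖ ≤ 1/2 * |τ - 0| := by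
      apply intervalIntegral.norm_integral_le_of_norm_le_const
      intro s hs
      rw [uIoc_of_le hτpos.le] at hs
      exact le_of_lt (hδ ⟨hs.1, le_trans hs.2 hτδ.le⟩)
    have heq : (1 : X →L[ℝ] X) - τ⁻¹ • B = -(τ⁻¹ • (B - τ • 1)) := by
      rw [smul_sub, smul_smul, inv_mul_cancel₀ hτpos.ne', one_smul]
      abel
    rw [heq, norm_neg]
    have h2 := norm_smul τ⁻¹ (B - τ • (1 : X →L[ℝ] X))
    rw [h2, ← hsub]
    calc ‖τ⁻¹‖ * ‖∫ s in (0:ℝ)..τ, (S s - 1)‖ ≤ ‖τ⁻¹‖ * (1/2 * |τ - 0|) :=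
          mul_le_mul_of_nonneg_left hbound (norm_nonneg _)
      _ = 1/2 := by
          rw [Real.norm_eq_abs, abs_of_pos (inv_pos.2 hτpos), sub_zero, abs_of_pos hτpos]
          field_simp
      _ < 1 := by norm_num
  obtain ⟨U, hUdef⟩ : ∃ U : (X →L[ℝ] X)ˣ, U = Units.oneSub _ hBnorm := ⟨_, rfl⟩
  have hUval : (U : X →L[ℝ] X) = τ⁻¹ • B := by
    rw [hUdef, Units.val_oneSub, sub_sub_cancel]
  obtain ⟨V, hVdef⟩ : ∃ V : X →L[ℝ] X, V = τ⁻¹ • (↑U⁻¹ : X →L[ℝ] X) := ⟨_, rfl⟩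
  have hBV : B * V = 1 := by
    have hBU : B = τ • (U : X →L[ℝ] X) := by
      rw [hUval, smul_smul, mul_inv_cancel₀ hτpos.ne', one_smul]
    rw [hBU, hVdef, smul_mul_assoc, mul_smul_comm, smul_smul, mul_inv_cancel₀ hτpos.ne',
      one_smul, U.mul_inv]
  -- eventual identity
  have hkey : ∀ h : ℝ, h ∈ Ioc (0:ℝ) τ →
      (S h - 1) * B = (∫ s in τ..(τ+h), S s) - ∫ s in (0:ℝ)..h, S s := by
    intro h hh
    have hτh : τ + h ≤ δ := by
      have := hh.2; simp only [hτdef] at *; linarith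
    have := shift_sub_integral (ContinuousLinearMap.mul ℝ (X →L[ℝ] X) (S h))
      hτpos.le hh.1.le (hcont.mono (Icc_subset_Icc le_rfl hτh)) ?_
    · rw [← this, ContinuousLinearMap.mul_apply', sub_mul, one_mul, hBdef]
    · intro s hs
      rw [ContinuousLinearMap.mul_apply']
      have := hSadd h s hh.1.le hs.1
      rw [mulid] at this
      rw [← this, add_comm]
  -- first limit
  have L1 : Tendsto (fun h : ℝ => h⁻¹ • ((S h - 1) * B)) (𝓝[>] (0:ℝ)) (𝓝 (S τ - 1)) := by
    have hc := core_tendsto hτpos.le hτδ hcont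
    rw [hS0'] at hc
    refine Tendsto.congr' ?_ hc
    filter_upwards [Ioc_mem_nhdsGT_of_mem (Set.left_mem_Ico.2 hτpos)] with h hh
    rw [hkey h hh]
  -- the generator
  refine ⟨(S τ - 1) * V, ?_, ?_⟩
  case _ =>
    have hident : ∀ h : ℝ, h⁻¹ • (S h - 1) = (h⁻¹ • ((S h - 1) * B)) * V := by
      intro h
      rw [smul_mul_assoc, mul_assoc, hBV, mul_one]
    exact ((L1.mul tendsto_const_nhds).congr fun h => (hident h).symm)
  case _ =>
    obtain ⟨A, hAdef⟩ : ∃ A : X →L[ℝ] X, A = (S τ - 1) * V := ⟨_, rfl⟩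
    rw [← hAdef]
    have hA : Tendsto (fun t : ℝ => t⁻¹ • (S t - 1)) (𝓝[>] (0:ℝ)) (𝓝 A) := by
      have hident : ∀ h : ℝ, h⁻¹ • (S h - 1) = (h⁻¹ • ((S h - 1) * B)) * V := by
        intro h
        rw [smul_mul_assoc, mul_assoc, hBV, mul_one]
      rw [hAdef]
      exact ((L1.mul tendsto_const_nhds).congr fun h => (hident h).symm)
    intro t ht
    have hcoe : (fun y : X →L[ℝ] X => A * y) = ⇑(ContinuousLinearMap.mul ℝ (X →L[ℝ] X) A) := by
      ext y
      rw [ContinuousLinearMap.mul_apply']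
    have hv : ∀ s : ℝ, LipschitzWith ‖ContinuousLinearMap.mul ℝ (X →L[ℝ] X) A‖₊
        (fun y : X →L[ℝ] X => A * y) := by
      intro s
      rw [hcoe]
      exact (ContinuousLinearMap.mul ℝ (X →L[ℝ] X) A).lipschitz
    have hf : ContinuousOn S (Icc 0 t) := opContOn hS0 hSadd hScont h1 t
    have hf' : ∀ c ∈ Ico (0:ℝ) t, HasDerivWithinAt S (A * S c) (Ici c) c := by
      intro c hc
      rw [hasDerivWithinAt_iff_tendsto_slope, Ici_sdiff_left]
      have hcomp : Tendsto (fun u : ℝ => (u - c)⁻¹ • (S (u - c) - 1)) (𝓝[Ioi c] c) (𝓝 A) :=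
        hA.comp (tendsto_sub_left_nhdsGT c)
      have hmul := hcomp.mul (tendsto_const_nhds (x := S c))
      refine Tendsto.congr' ?_ hmul
      filter_upwards [self_mem_nhdsWithin] with u hu
      rw [mem_Ioi] at hu
      have hSu : S (u - c) * S c = S u := by
        have := hSadd (u - c) c (by linarith [hc.1]) hc.1
        rw [mulid] at this
        rw [← this, sub_add_cancel]
      rw [slope_def_module, smul_mul_assoc, sub_mul, one_mul, hSu]
    have hg : ContinuousOn (fun u : ℝ => NormedSpace.exp (u • A)) (Icc 0 t) :=
      fun u _ => (hasDerivAt_exp_smul_const' A u).continuousAt.continuousWithinAt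
    have hg' : ∀ c ∈ Ico (0:ℝ) t,
        HasDerivWithinAt (fun u : ℝ => NormedSpace.exp (u • A))
          (A * NormedSpace.exp (c • A)) (Ici c) c :=
      fun c _ => (hasDerivAt_exp_smul_const' A c).hasDerivWithinAt
    have ha : S 0 = NormedSpace.exp ((0:ℝ) • A) := by
      rw [hS0', zero_smul, NormedSpace.exp_zero]
    exact ODE_solution_unique hv hf hf' hg hg' ha ⟨ht, le_refl t⟩

lemma corePt (hS0 : S 0 = ContinuousLinearMap.id ℝ X)
    (hSadd : ∀ s t : ℝ, 0 ≤ s → 0 ≤ t → S (s + t) = (S s).comp (S t))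
    (hScont : ∀ x : X, Tendsto (fun t : ℝ => S t x) (𝓝[>] (0:ℝ)) (𝓝 x))
    (h1 : Tendsto (fun t : ℝ => ‖S t - 1‖) (𝓝[>] (0:ℝ)) (𝓝 0)) :
    ∃ A : X →L[ℝ] X,
      (∀ x : X, Tendsto (fun t : ℝ => t⁻¹ • (S t x - x)) (𝓝[>] (0:ℝ)) (𝓝 (A x))) ∧
      ∀ t : ℝ, 0 ≤ t → S t = NormedSpace.exp (t • A) := by
  obtain ⟨A, hA, hexp⟩ := core hS0 hSadd hScont h1
  refine ⟨A, fun x => ?_, hexp⟩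
  rw [tendsto_iff_norm_sub_tendsto_zero]
  have hA' := tendsto_iff_norm_sub_tendsto_zero.1 hA
  have hb : Tendsto (fun t : ℝ => ‖t⁻¹ • (S t - 1) - A‖ * ‖x‖) (𝓝[>] (0:ℝ)) (𝓝 0) := by
    have := hA'.mul_const ‖x‖
    rwa [zero_mul] at this
  refine squeeze_zero (fun t => norm_nonneg _) (fun t => ?_) hb
  have hident : t⁻¹ • (S t x - x) - A x = (t⁻¹ • (S t - 1) - A) x := by
    simp [ContinuousLinearMap.sub_apply, ContinuousLinearMap.smul_apply,
      ContinuousLinearMap.one_apply]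
  rw [hident]
  exact (t⁻¹ • (S t - 1) - A).le_opNorm x

lemma bound_to_normcont (hS0 : S 0 = ContinuousLinearMap.id ℝ X)
    (hSadd : ∀ s t : ℝ, 0 ≤ s → 0 ≤ t → S (s + t) = (S s).comp (S t))
    (hScont : ∀ x : X, Tendsto (fun t : ℝ => S t x) (𝓝[>] (0:ℝ)) (𝓝 x))
    (h2 : ∃ C : ℝ, ∀ x y : X,
      Tendsto (fun t : ℝ => t⁻¹ • (S t x - x)) (𝓝[>] (0:ℝ)) (𝓝 y) → ‖y‖ ≤ C * ‖x‖) :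
    Tendsto (fun t : ℝ => ‖S t - 1‖) (𝓝[>] (0:ℝ)) (𝓝 0) := by
  obtain ⟨C, hC⟩ := h2
  obtain ⟨C', hC'0, hC'⟩ : ∃ C' : ℝ, 0 ≤ C' ∧ ∀ x y : X,
      Tendsto (fun t : ℝ => t⁻¹ • (S t x - x)) (𝓝[>] (0:ℝ)) (𝓝 y) → ‖y‖ ≤ C' * ‖x‖ := by
    refine ⟨max C 0, le_max_right _ _, fun x y hxy => ?_⟩
    exact le_trans (hC x y hxy) (mul_le_mul_of_nonneg_right (le_max_left _ _) (norm_nonneg _))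
  obtain ⟨δ, hδpos, M, hM1, hM⟩ := locBound hS0 hScont
  have hM0 : (0:ℝ) < M := lt_of_lt_of_le zero_lt_one hM1
  have key : ∀ τ : ℝ, τ ∈ Ioc (0:ℝ) (δ/2) → ‖S τ - 1‖ ≤ (C' * M) * τ := by
    intro τ hτ
    have hτpos : 0 < τ := hτ.1
    have hτδ : τ < δ := by have := hτ.2; linarith
    refine ContinuousLinearMap.opNorm_le_bound _ (by positivity) fun x => ?_
    have hcontx : ContinuousOn (fun u => S u x) (Icc 0 δ) := ptContOn hSadd hScont hM1 hM x
    obtain ⟨z, hzdef⟩ : ∃ z : X, z = τ⁻¹ • ∫ s in (0:ℝ)..τ, S s x := ⟨_, rfl⟩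
    have hlim : Tendsto (fun h : ℝ => h⁻¹ • (S h z - z)) (𝓝[>] (0:ℝ))
        (𝓝 (τ⁻¹ • (S τ x - x))) := by
      have hct := core_tendsto hτpos.le hτδ hcontx
      have hS0x : S 0 x = x := by rw [hS0]; rfl
      rw [hS0x] at hct
      have hct2 := hct.const_smul τ⁻¹
      refine Tendsto.congr' ?_ hct2
      filter_upwards [Ioc_mem_nhdsGT_of_mem (Set.left_mem_Ico.2 (by linarith : (0:ℝ) < δ/2))]
        with h hh
      have hτh : τ + h ≤ δ := by have := hh.2; have := hτ.2; linarith
      have hshift := shift_sub_integral (S h) hτpos.le hh.1.le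
        (hcontx.mono (Icc_subset_Icc le_rfl hτh)) ?_
      · have hz : S h z - z = τ⁻¹ • (S h (∫ s in (0:ℝ)..τ, S s x) - ∫ s in (0:ℝ)..τ, S s x) := by
          rw [hzdef, _root_.map_smul, smul_sub]
        rw [hz, hshift, smul_comm]
      · intro s hs
        have hcomp := hSadd h s hh.1.le hs.1
        rw [add_comm s h, hcomp]
        rfl
    have hb1 : ‖τ⁻¹ • (S τ x - x)‖ ≤ C' * ‖z‖ := hC' z _ hlim
    have hznorm : ‖z‖ ≤ M * ‖x‖ := by
      have hint : ‖∫ s in (0:ℝ)..τ, S s x‖ ≤ M * ‖x‖ * |τ - 0| := by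
        apply intervalIntegral.norm_integral_le_of_norm_le_const
        intro s hs
        rw [uIoc_of_le hτpos.le] at hs
        calc ‖S s x‖ ≤ ‖S s‖ * ‖x‖ := (S s).le_opNorm x
          _ ≤ M * ‖x‖ := mul_le_mul_of_nonneg_right
              (hM s ⟨hs.1.le, le_trans hs.2 hτδ.le⟩) (norm_nonneg _)
      have h2 := norm_smul τ⁻¹ (∫ s in (0:ℝ)..τ, S s x)
      rw [hzdef, h2, Real.norm_eq_abs, abs_of_pos (inv_pos.2 hτpos)]
      calc τ⁻¹ * ‖∫ s in (0:ℝ)..τ, S s x‖ ≤ τ⁻¹ * (M * ‖x‖ * |τ - 0|) :=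
            mul_le_mul_of_nonneg_left hint (by positivity)
        _ = M * ‖x‖ := by
            rw [sub_zero, abs_of_pos hτpos]
            field_simp
    have h3 := norm_smul τ⁻¹ (S τ x - x)
    rw [h3, Real.norm_eq_abs, abs_of_pos (inv_pos.2 hτpos)] at hb1
    have hx : ‖(S τ - 1) x‖ = ‖S τ x - x‖ := by
      simp [ContinuousLinearMap.sub_apply, ContinuousLinearMap.one_apply]
    rw [hx]
    have hb2 : τ⁻¹ * ‖S τ x - x‖ ≤ C' * (M * ‖x‖) :=
      le_trans hb1 (mul_le_mul_of_nonneg_left hznorm hC'0)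
    have := mul_le_mul_of_nonneg_left hb2 hτpos.le
    rw [← mul_assoc, mul_inv_cancel₀ hτpos.ne', one_mul] at this
    calc ‖S τ x - x‖ ≤ τ * (C' * (M * ‖x‖)) := this
      _ = C' * M * τ * ‖x‖ := by ring
  have htend : Tendsto (fun τ : ℝ => (C' * M) * τ) (𝓝[>] (0:ℝ)) (𝓝 0) := by
    have : Tendsto (fun τ : ℝ => (C' * M) * τ) (𝓝 (0:ℝ)) (𝓝 ((C' * M) * 0)) :=
      (continuous_const.mul continuous_id).tendsto 0
    rw [mul_zero] at this
    exact this.mono_left nhdsWithin_le_nhds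
  refine squeeze_zero' ?_ ?_ htend
  · filter_upwards with t
    exact norm_nonneg _
  · filter_upwards [Ioc_mem_nhdsGT_of_mem (Set.left_mem_Ico.2 (by linarith : (0:ℝ) < δ/2))]
      with τ hτ
    exact key τ hτ

lemma domain_to_bound (hS0 : S 0 = ContinuousLinearMap.id ℝ X)
    (hSadd : ∀ s t : ℝ, 0 ≤ s → 0 ≤ t → S (s + t) = (S s).comp (S t))
    (hScont : ∀ x : X, Tendsto (fun t : ℝ => S t x) (𝓝[>] (0:ℝ)) (𝓝 x))
    (h3 : ∀ x : X, ∃ y : X, Tendsto (fun t : ℝ => t⁻¹ • (S t x - x)) (𝓝[>] (0:ℝ)) (𝓝 y)) :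
    ∃ C : ℝ, ∀ x y : X,
      Tendsto (fun t : ℝ => t⁻¹ • (S t x - x)) (𝓝[>] (0:ℝ)) (𝓝 y) → ‖y‖ ≤ C * ‖x‖ := by
  obtain ⟨M, hM1, hM⟩ := globBound hS0 hSadd hScont 1
  set g : Ioc (0:ℝ) 1 → X →L[ℝ] X := fun t => ((t : ℝ))⁻¹ • (S t - 1) with hgdef
  have happ : ∀ (t : Ioc (0:ℝ) 1) (x : X), g t x = ((t:ℝ))⁻¹ • (S t x - x) := by
    intro t x
    simp [hgdef, ContinuousLinearMap.smul_apply, ContinuousLinearMap.sub_apply,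
      ContinuousLinearMap.one_apply]
  have hpt : ∀ x : X, ∃ C : ℝ, ∀ t : Ioc (0:ℝ) 1, ‖g t x‖ ≤ C := by
    intro x
    obtain ⟨y, hy⟩ := h3 x
    have hev : ∀ᶠ t in 𝓝[>] (0:ℝ), ‖t⁻¹ • (S t x - x)‖ < ‖y‖ + 1 :=
      hy.norm.eventually (gt_mem_nhds (lt_add_one ‖y‖))
    obtain ⟨η, hη, hsub⟩ := mem_nhdsGT_iff_exists_Ioc_subset.1 hev
    rw [mem_Ioi] at hη
    refine ⟨max (‖y‖ + 1) (η⁻¹ * ((M + 1) * ‖x‖)), fun t => ?_⟩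
    rw [happ]
    rcases le_or_gt (t:ℝ) η with h | h
    · exact le_trans (le_of_lt (hsub ⟨t.2.1, h⟩)) (le_max_left _ _)
    · refine le_trans ?_ (le_max_right _ _)
      have h1 : ‖((t:ℝ))⁻¹ • (S t x - x)‖ = ((t:ℝ))⁻¹ * ‖S (t:ℝ) x - x‖ := by
        rw [norm_smul, Real.norm_eq_abs, abs_of_pos (inv_pos.2 t.2.1)]
      rw [h1]
      have h2 : ‖S (t:ℝ) x - x‖ ≤ (M + 1) * ‖x‖ := by
        calc ‖S (t:ℝ) x - x‖ ≤ ‖S (t:ℝ) x‖ + ‖x‖ := norm_sub_le _ _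
          _ ≤ M * ‖x‖ + ‖x‖ := by
              have := (S (t:ℝ)).le_opNorm x
              have h4 : ‖S (t:ℝ)‖ * ‖x‖ ≤ M * ‖x‖ :=
                mul_le_mul_of_nonneg_right (hM _ ⟨t.2.1.le, t.2.2⟩) (norm_nonneg _)
              linarith
          _ = (M + 1) * ‖x‖ := by ring
      have h3' : ((t:ℝ))⁻¹ ≤ η⁻¹ := by
        apply inv_anti₀ hη (le_of_lt h)
      exact mul_le_mul h3' h2 (norm_nonneg _) (by positivity)
  obtain ⟨C', hC'⟩ := banach_steinhaus hpt
  refine ⟨max C' 0, fun x y hxy => ?_⟩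
  have hnb : (𝓝[>] (0:ℝ)).NeBot := nhdsGT_neBot 0
  refine le_of_tendsto hxy.norm ?_
  filter_upwards [Ioc_mem_nhdsGT_of_mem (Set.left_mem_Ico.2 zero_lt_one)] with t ht
  have := happ ⟨t, ht⟩ x
  rw [← this]
  calc ‖g ⟨t, ht⟩ x‖ ≤ ‖g ⟨t, ht⟩‖ * ‖x‖ := (g ⟨t, ht⟩).le_opNorm x
    _ ≤ max C' 0 * ‖x‖ :=
        mul_le_mul_of_nonneg_right (le_trans (hC' ⟨t, ht⟩) (le_max_left _ _)) (norm_nonneg _)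

end Semigroup

end SemigroupAux

section Main
open Set

/-- **Characterization of norm continuous semigroups.**
Let `(S t)_{t ≥ 0}` be a C₀-semigroup on a Banach space `X` with generator `A`. Then the
following are equivalent: (1) the semigroup is norm continuous, i.e. `‖S t - Id‖ → 0` as
`t → 0+`; (2) the generator is a continuous (bounded) operator, i.e. there is `C` with
`‖A x‖ ≤ C * ‖x‖` for all `x ∈ D(A)`; (3) `D(A) = X`, i.e. for every `x` the limit defining
the generator exists. If these conditions hold, then the generator is (given by) a bounded
operator `A : X →L[ℝ] X` and `S t = exp (t • A)` for all `t ≥ 0`. -/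
theorem semigroup_norm_continuous_iff_generator_bounded
    {X : Type*} [NormedAddCommGroup X] [NormedSpace ℝ X] [CompleteSpace X]
    (S : ℝ → X →L[ℝ] X)
    (hS0 : S 0 = ContinuousLinearMap.id ℝ X)
    (hSadd : ∀ s t : ℝ, 0 ≤ s → 0 ≤ t → S (s + t) = (S s).comp (S t))
    (hScont : ∀ x : X, Tendsto (fun t : ℝ => S t x) (𝓝[>] (0 : ℝ)) (𝓝 x)) :
    ((Tendsto (fun t : ℝ => ‖S t - ContinuousLinearMap.id ℝ X‖) (𝓝[>] (0 : ℝ)) (𝓝 0)) ↔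
      (∃ C : ℝ, ∀ x y : X,
        Tendsto (fun t : ℝ => t⁻¹ • (S t x - x)) (𝓝[>] (0 : ℝ)) (𝓝 y) → ‖y‖ ≤ C * ‖x‖)) ∧
    ((Tendsto (fun t : ℝ => ‖S t - ContinuousLinearMap.id ℝ X‖) (𝓝[>] (0 : ℝ)) (𝓝 0)) ↔
      (∀ x : X, ∃ y : X,
        Tendsto (fun t : ℝ => t⁻¹ • (S t x - x)) (𝓝[>] (0 : ℝ)) (𝓝 y))) ∧
    ((Tendsto (fun t : ℝ => ‖S t - ContinuousLinearMap.id ℝ X‖) (𝓝[>] (0 : ℝ)) (𝓝 0)) →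
      ∃ A : X →L[ℝ] X,
        (∀ x : X, Tendsto (fun t : ℝ => t⁻¹ • (S t x - x)) (𝓝[>] (0 : ℝ)) (𝓝 (A x))) ∧
        ∀ t : ℝ, 0 ≤ t → S t = NormedSpace.exp (t • A)) := by
  have hone : (fun t : ℝ => ‖S t - ContinuousLinearMap.id ℝ X‖)
      = fun t : ℝ => ‖S t - 1‖ := by
    funext t
    rw [ContinuousLinearMap.one_def]
  rw [hone]
  refine ⟨⟨fun h1 => ?_, fun h2 => bound_to_normcont hS0 hSadd hScont h2⟩,
    ⟨fun h1 => ?_, fun h3 =>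
      bound_to_normcont hS0 hSadd hScont (domain_to_bound hS0 hSadd hScont h3)⟩,
    fun h1 => corePt hS0 hSadd hScont h1⟩
  · obtain ⟨A, hAx, _⟩ := corePt hS0 hSadd hScont h1
    refine ⟨‖A‖, fun x y hxy => ?_⟩
    have hy : y = A x := tendsto_nhds_unique hxy (hAx x)
    rw [hy]
    exact A.le_opNorm x
  · obtain ⟨A, hAx, _⟩ := corePt hS0 hSadd hScont h1
    exact fun x => ⟨A x, hAx x⟩

end Main
end

section
/- Let E be a separable Banach space, let (S_t)_{t≥0} be a C₀-semigroup on E, and let f : ℝ₊ → E be a strongly measurable mapping such that ∫₀ᵗ ‖f(s)‖ ds < ∞ for all t ≥ 0. Then the mapping F : ℝ₊ → E defined by the Bochner integral F(t) = ∫₀ᵗ S_{t−s} f(s) ds is continuous. -/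
open Filter Topology MeasureTheory

section auxSemigroup

variable {E : Type*} [NormedAddCommGroup E] [NormedSpace ℝ E] [CompleteSpace E]
variable (S : ℝ → E →L[ℝ] E) (hS0 : S 0 = ContinuousLinearMap.id ℝ E)
    (hSadd : ∀ s t : ℝ, 0 ≤ s → 0 ≤ t → S (s + t) = (S s).comp (S t))
    (hScont : ∀ x : E, Tendsto (fun t : ℝ => S t x) (𝓝[>] (0:ℝ)) (𝓝 x))

omit [CompleteSpace E] in
include hS0 hScont in
/-- Strong continuity at `0` from the right extends to `𝓝[Ici 0] 0`. -/
lemma semigroup_orbit_tendsto_zero (x : E) :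
    Tendsto (fun t : ℝ => S t x) (𝓝[Set.Ici (0:ℝ)] 0) (𝓝 x) := by
  have hs : Set.Ici (0:ℝ) = {0} ∪ Set.Ioi 0 := by
    ext y; simp [le_iff_lt_or_eq, or_comm, eq_comm]
  rw [hs, nhdsWithin_union, tendsto_sup]
  refine ⟨?_, hScont x⟩
  rw [nhdsWithin_singleton]
  have : Tendsto (fun t : ℝ => S t x) (pure 0) (pure (S 0 x)) := tendsto_pure_pure _ _
  simpa [hS0] using this.mono_right (pure_le_nhds _)

include hS0 hScont in
/-- Via Banach–Steinhaus, the semigroup is uniformly bounded near `0`. -/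
lemma semigroup_exists_bound_near_zero :
    ∃ δ > (0:ℝ), ∃ C : ℝ, ∀ u ∈ Set.Icc (0:ℝ) δ, ‖S u‖ ≤ C := by
  by_contra h
  push_neg at h
  choose u hu1 hu2 using fun n : ℕ => h (1/(n+1)) (by positivity) n
  have hu0 : Tendsto u atTop (𝓝[Set.Ici (0:ℝ)] 0) := by
    rw [tendsto_nhdsWithin_iff]
    constructor
    · exact squeeze_zero (fun n => (hu1 n).1) (fun n => (hu1 n).2)
        tendsto_one_div_add_atTop_nhds_zero_nat
    · exact Eventually.of_forall fun n => (hu1 n).1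
  have key : ∀ x : E, ∃ C, ∀ n, ‖S (u n) x‖ ≤ C := by
    intro x
    have h1 : Tendsto (fun n => ‖S (u n) x‖) atTop (𝓝 ‖x‖) :=
      ((semigroup_orbit_tendsto_zero S hS0 hScont x).comp hu0).norm
    obtain ⟨C, hC⟩ := h1.bddAbove_range
    exact ⟨C, fun n => hC ⟨n, rfl⟩⟩
  obtain ⟨C', hC'⟩ := banach_steinhaus (g := fun n : ℕ => S (u n)) key
  obtain ⟨n, hn⟩ := exists_nat_gt C'
  exact absurd (hC' n) (not_le.2 (lt_of_lt_of_le hn (le_of_lt (hu2 n))))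

include hS0 hSadd hScont in
/-- The semigroup is uniformly bounded on every interval `[0, T]`. -/
lemma semigroup_exists_bound (T : ℝ) :
    ∃ M : ℝ, 1 ≤ M ∧ ∀ u ∈ Set.Icc (0:ℝ) T, ‖S u‖ ≤ M := by
  obtain ⟨δ, hδ, C, hC⟩ := semigroup_exists_bound_near_zero S hS0 hScont
  set C' := max C 1 with hC'
  have hC1 : (1:ℝ) ≤ C' := le_max_right _ _
  have h1 : ∀ n : ℕ, ∀ u ∈ Set.Icc (0:ℝ) ((n+1)*δ), ‖S u‖ ≤ C'^(n+1) := by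
    intro n
    induction n with
    | zero =>
      intro u hu
      have : u ∈ Set.Icc (0:ℝ) δ := ⟨hu.1, by have := hu.2; push_cast at this; linarith⟩
      have h0 : ‖S u‖ ≤ C' := (hC u this).trans (le_max_left _ _)
      simpa using h0
    | succ n ih =>
      intro u hu
      by_cases hle : u ≤ (n+1)*δ
      · exact (ih u ⟨hu.1, hle⟩).trans (pow_le_pow_right₀ hC1 (by omega))
      · push_neg at hle
        have hud : (0:ℝ) ≤ u - δ := by nlinarith [Nat.cast_nonneg (α := ℝ) n]
        have heq : S u = (S (u - δ)).comp (S δ) := by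
          have := hSadd (u - δ) δ hud hδ.le
          rwa [sub_add_cancel] at this
        have hub : u - δ ≤ (n+1)*δ := by
          have := hu.2; push_cast at this ⊢; linarith
        calc ‖S u‖ ≤ ‖S (u - δ)‖ * ‖S δ‖ := by
              rw [heq]; exact (S (u-δ)).opNorm_comp_le (S δ)
          _ ≤ C'^(n+1) * C' := by
              apply mul_le_mul (ih (u - δ) ⟨hud, hub⟩)
                ((hC δ ⟨hδ.le, le_refl δ⟩).trans (le_max_left _ _)) (norm_nonneg _)
                (by positivity)
          _ = C'^(n+2) := by ring
  obtain ⟨n, hn⟩ := exists_nat_ge (T/δ)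
  refine ⟨C'^(n+1), one_le_pow₀ hC1, fun u hu => h1 n u ⟨hu.1, hu.2.trans ?_⟩⟩
  have : T ≤ n * δ := (div_le_iff₀ hδ).mp hn
  nlinarith

include hS0 hSadd hScont in
/-- The orbit map `u ↦ S u x` is continuous on `[0, ∞)`. -/
lemma semigroup_orbit_continuousOn (x : E) :
    ContinuousOn (fun u : ℝ => S u x) (Set.Ici (0:ℝ)) := by
  intro u₀ hu₀
  have hu₀' : (0:ℝ) ≤ u₀ := hu₀
  rw [ContinuousWithinAt]
  have hsplit : Set.Ici (0:ℝ) = Set.Icc 0 u₀ ∪ Set.Ici u₀ := by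
    ext y; constructor
    · intro hy; rcases le_total y u₀ with h | h
      · exact Or.inl ⟨hy, h⟩
      · exact Or.inr h
    · rintro (⟨h, _⟩ | h)
      · exact h
      · exact le_trans hu₀' h
  rw [hsplit, nhdsWithin_union, tendsto_sup]
  constructor
  · -- left continuity
    obtain ⟨M, hM1, hM⟩ := semigroup_exists_bound S hS0 hSadd hScont u₀
    have hmap : Tendsto (fun u : ℝ => u₀ - u) (𝓝[Set.Icc (0:ℝ) u₀] u₀) (𝓝[Set.Ici (0:ℝ)] 0) := by
      apply tendsto_nhdsWithin_of_tendsto_nhds_of_eventually_within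
      · have : Tendsto (fun u : ℝ => u₀ - u) (𝓝 u₀) (𝓝 (u₀ - u₀)) :=
          (tendsto_const_nhds.sub tendsto_id)
        simpa using this.mono_left nhdsWithin_le_nhds
      · filter_upwards [eventually_mem_nhdsWithin] with u hu
        exact sub_nonneg.2 hu.2
    have hlim : Tendsto (fun u : ℝ => M * ‖S (u₀ - u) x - x‖)
        (𝓝[Set.Icc (0:ℝ) u₀] u₀) (𝓝 0) := by
      have h1 : Tendsto (fun u : ℝ => S (u₀ - u) x - x) (𝓝[Set.Icc (0:ℝ) u₀] u₀) (𝓝 (x - x)) :=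
        ((semigroup_orbit_tendsto_zero S hS0 hScont x).comp hmap).sub tendsto_const_nhds
      have := (h1.norm.const_mul M)
      simpa using this
    rw [tendsto_iff_norm_sub_tendsto_zero]
    apply squeeze_zero_norm' _ hlim
    filter_upwards [eventually_mem_nhdsWithin] with u hu
    have heq : S u₀ = (S u).comp (S (u₀ - u)) := by
      have := hSadd u (u₀ - u) hu.1 (sub_nonneg.2 hu.2)
      rwa [add_sub_cancel] at this
    have : S u x - S u₀ x = S u (x - S (u₀ - u) x) := by
      rw [heq]; simp [map_sub]
    rw [norm_norm, this]
    calc ‖S u (x - S (u₀ - u) x)‖ ≤ ‖S u‖ * ‖x - S (u₀ - u) x‖ := (S u).le_opNorm _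
      _ ≤ M * ‖S (u₀ - u) x - x‖ := by
          rw [norm_sub_rev]
          exact mul_le_mul_of_nonneg_right (hM u ⟨hu.1, hu.2⟩) (norm_nonneg _)
  · -- right continuity
    have hmap : Tendsto (fun u : ℝ => u - u₀) (𝓝[Set.Ici u₀] u₀) (𝓝[Set.Ici (0:ℝ)] 0) := by
      apply tendsto_nhdsWithin_of_tendsto_nhds_of_eventually_within
      · have : Tendsto (fun u : ℝ => u - u₀) (𝓝 u₀) (𝓝 (u₀ - u₀)) :=
          (tendsto_id.sub tendsto_const_nhds)
        simpa using this.mono_left nhdsWithin_le_nhds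
      · filter_upwards [eventually_mem_nhdsWithin] with u hu
        exact sub_nonneg.2 (Set.mem_Ici.1 hu)
    have h1 : Tendsto (fun u : ℝ => S u₀ (S (u - u₀) x)) (𝓝[Set.Ici u₀] u₀) (𝓝 (S u₀ x)) :=
      ((S u₀).continuous.tendsto x).comp
        ((semigroup_orbit_tendsto_zero S hS0 hScont x).comp hmap)
    apply h1.congr'
    filter_upwards [eventually_mem_nhdsWithin] with u hu
    rw [← ContinuousLinearMap.comp_apply, ← hSadd u₀ (u - u₀) hu₀' (sub_nonneg.2 hu)]
    congr 1; ring_nf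

include hS0 hSadd hScont in
/-- The map `(u, x) ↦ S (max u 0) x` is jointly continuous. -/
lemma semigroup_jointly_continuous :
    Continuous (fun p : ℝ × E => S (max p.1 0) p.2) := by
  rw [continuous_iff_continuousAt]
  rintro ⟨u₀, x₀⟩
  obtain ⟨M, hM1, hM⟩ := semigroup_exists_bound S hS0 hSadd hScont (max u₀ 0 + 1)
  have h1 : Tendsto (fun p : ℝ × E => S (max p.1 0) x₀) (𝓝 (u₀, x₀))
      (𝓝 (S (max u₀ 0) x₀)) := by
    have horb := (semigroup_orbit_continuousOn S hS0 hSadd hScont x₀)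
      (max u₀ 0) (Set.mem_Ici.2 (le_max_right _ _))
    refine horb.tendsto.comp (tendsto_nhdsWithin_of_tendsto_nhds_of_eventually_within _ ?_ ?_)
    · exact ((continuous_fst.max continuous_const).tendsto _)
    · exact Eventually.of_forall fun p => Set.mem_Ici.2 (le_max_right _ _)
  have h2 : Tendsto (fun p : ℝ × E => S (max p.1 0) (p.2 - x₀)) (𝓝 (u₀, x₀)) (𝓝 0) := by
    apply squeeze_zero_norm' (a := fun p : ℝ × E => M * ‖p.2 - x₀‖)
    · filter_upwards [eventually_le_nhds (show u₀ < u₀ + 1 by linarith) |>.prod_inl_nhds x₀]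
        with p hp
      have hmem : max p.1 0 ∈ Set.Icc (0:ℝ) (max u₀ 0 + 1) := by
        constructor
        · exact le_max_right _ _
        · exact max_le (by linarith [le_max_left u₀ (0:ℝ)]) (by positivity)
      calc ‖S (max p.1 0) (p.2 - x₀)‖ ≤ ‖S (max p.1 0)‖ * ‖p.2 - x₀‖ := (S _).le_opNorm _
        _ ≤ M * ‖p.2 - x₀‖ := mul_le_mul_of_nonneg_right (hM _ hmem) (norm_nonneg _)
    · have : Tendsto (fun p : ℝ × E => M * ‖p.2 - x₀‖) (𝓝 (u₀, x₀)) (𝓝 (M * ‖x₀ - x₀‖)) :=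
        (tendsto_const_nhds.mul (((continuous_snd.sub continuous_const).norm).tendsto _))
      simpa using this
  have h3 := h2.add h1
  have heq : ∀ p : ℝ × E, S (max p.1 0) (p.2 - x₀) + S (max p.1 0) x₀ = S (max p.1 0) p.2 := by
    intro p; rw [map_sub]; abel
  rw [ContinuousAt]
  simp only [heq] at h3
  simpa using h3

end auxSemigroup

/-- **Continuity of deterministic convolution with a C₀-semigroup.**
Let `E` be a separable Banach space, let `(S t)_{t ≥ 0}` be a C₀-semigroup on `E`, and let
`f : ℝ₊ → E` be strongly measurable with `∫₀ᵗ ‖f s‖ ds < ∞` for all `t ≥ 0`. Then the mapping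
`F : ℝ₊ → E`, `F t = ∫₀ᵗ S (t - s) (f s) ds` (a Bochner integral), is continuous. -/
theorem convolution_semigroup_continuous
    {E : Type*} [NormedAddCommGroup E] [NormedSpace ℝ E] [CompleteSpace E]
    [TopologicalSpace.SeparableSpace E]
    (S : ℝ → E →L[ℝ] E)
    (hS0 : S 0 = ContinuousLinearMap.id ℝ E)
    (hSadd : ∀ s t : ℝ, 0 ≤ s → 0 ≤ t → S (s + t) = (S s).comp (S t))
    (hScont : ∀ x : E, Tendsto (fun t : ℝ => S t x) (𝓝[>] (0 : ℝ)) (𝓝 x))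
    (f : ℝ → E) (hf : StronglyMeasurable f)
    (hint : ∀ t : ℝ, 0 ≤ t → (∫⁻ s in Set.Icc (0 : ℝ) t, (‖f s‖₊ : ENNReal)) < ⊤) :
    ContinuousOn (fun t : ℝ => ∫ s in (0:ℝ)..t, S (t - s) (f s)) (Set.Ici (0 : ℝ)) := by
  have hGc : Continuous (fun p : ℝ × E => S (max p.1 0) p.2) :=
    semigroup_jointly_continuous S hS0 hSadd hScont
  set G : ℝ × E → E := fun p => S (max p.1 0) p.2 with hGdef
  intro t₀ ht₀
  have ht₀' : (0:ℝ) ≤ t₀ := ht₀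
  set T : ℝ := t₀ + 1 with hT
  obtain ⟨M, hM1, hM⟩ := semigroup_exists_bound S hS0 hSadd hScont T
  -- integrability of f on Ioc 0 T
  have hfi : IntegrableOn f (Set.Ioc 0 T) := by
    refine ⟨hf.aestronglyMeasurable.restrict, ?_⟩
    rw [HasFiniteIntegral]
    calc (∫⁻ s in Set.Ioc (0:ℝ) T, (‖f s‖₊ : ENNReal))
        ≤ ∫⁻ s in Set.Icc (0:ℝ) T, (‖f s‖₊ : ENNReal) :=
          lintegral_mono_set Set.Ioc_subset_Icc_self
      _ < ⊤ := hint T (by linarith)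
  -- the integrand family
  set H : ℝ → ℝ → E := fun t s => (Set.Ioc (0:ℝ) t).indicator (fun s => G (t - s, f s)) s
    with hHdef
  have hrw : ∀ t ∈ Set.Ici (0:ℝ), (∫ s in (0:ℝ)..t, S (t - s) (f s)) = ∫ s, H t s := by
    intro t ht
    rw [intervalIntegral.integral_of_le ht, hHdef]
    rw [integral_indicator measurableSet_Ioc]
    apply setIntegral_congr_fun measurableSet_Ioc
    intro s hs
    simp only [hGdef]
    rw [max_eq_left (by linarith [hs.2] : (0:ℝ) ≤ t - s)]
  rw [ContinuousWithinAt]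
  have key : Tendsto (fun t => ∫ s, H t s) (𝓝[Set.Ici (0:ℝ)] t₀) (𝓝 (∫ s, H t₀ s)) := by
    apply tendsto_integral_filter_of_dominated_convergence
      ((Set.Ioc (0:ℝ) T).indicator (fun s => M * ‖f s‖))
    · -- measurability
      filter_upwards [eventually_mem_nhdsWithin] with t ht
      apply AEStronglyMeasurable.indicator _ measurableSet_Ioc
      exact hGc.comp_aestronglyMeasurable
        (((continuous_const.sub continuous_id).aestronglyMeasurable).prodMk
          hf.aestronglyMeasurable)
    · -- bound
      have hlt : ∀ᶠ t in 𝓝[Set.Ici (0:ℝ)] t₀, t < T := by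
        apply eventually_nhdsWithin_of_eventually_nhds
        exact eventually_lt_nhds (by linarith)
      filter_upwards [hlt, eventually_mem_nhdsWithin] with t htT ht
      apply Eventually.of_forall
      intro s
      by_cases hs : s ∈ Set.Ioc (0:ℝ) t
      · have hsT : s ∈ Set.Ioc (0:ℝ) T := ⟨hs.1, hs.2.trans htT.le⟩
        rw [hHdef]
        simp only [Set.indicator_of_mem hs, Set.indicator_of_mem hsT, hGdef]
        rw [max_eq_left (by linarith [hs.2] : (0:ℝ) ≤ t - s)]
        calc ‖S (t - s) (f s)‖ ≤ ‖S (t - s)‖ * ‖f s‖ := (S _).le_opNorm _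
          _ ≤ M * ‖f s‖ := mul_le_mul_of_nonneg_right
              (hM _ ⟨by linarith [hs.2], by linarith [hs.1]⟩) (norm_nonneg _)
      · rw [hHdef]
        simp only [Set.indicator_of_notMem hs]
        rw [norm_zero]
        apply Set.indicator_apply_nonneg
        intro _
        positivity
    · -- integrability of the bound
      exact MeasureTheory.IntegrableOn.integrable_indicator
        (hfi.norm.const_mul M) measurableSet_Ioc
    · -- pointwise a.e. convergence
      filter_upwards [compl_mem_ae_iff.2 (measure_singleton t₀)] with s hs
      simp only [Set.mem_compl_iff, Set.mem_singleton_iff] at hs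
      rcases le_or_gt s 0 with hs0 | hs0
      · -- s ≤ 0 : everything is 0
        have : ∀ t : ℝ, H t s = 0 := by
          intro t
          rw [hHdef]
          exact Set.indicator_of_notMem (fun h => absurd h.1 (not_lt.2 hs0)) _
        simp only [this]
        exact tendsto_const_nhds
      · rcases lt_or_gt_of_ne hs with hst | hst
        · -- 0 < s < t₀
          have hev : ∀ᶠ t in 𝓝[Set.Ici (0:ℝ)] t₀, H t s = G (t - s, f s) := by
            apply eventually_nhdsWithin_of_eventually_nhds
            filter_upwards [eventually_gt_nhds hst] with t hts
            rw [hHdef]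
            exact Set.indicator_of_mem (Set.mem_Ioc.2 ⟨hs0, hts.le⟩) _
          have hlim : Tendsto (fun t : ℝ => G (t - s, f s)) (𝓝[Set.Ici (0:ℝ)] t₀)
              (𝓝 (G (t₀ - s, f s))) := by
            apply Tendsto.mono_left _ nhdsWithin_le_nhds
            exact (hGc.tendsto _).comp
              (((continuous_id.sub continuous_const).prodMk continuous_const).tendsto t₀)
          have hH0 : H t₀ s = G (t₀ - s, f s) :=
            Set.indicator_of_mem (Set.mem_Ioc.2 ⟨hs0, hst.le⟩) _
          rw [hH0]
          exact hlim.congr' (by filter_upwards [hev] with t h using h.symm)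
        · -- s > t₀
          have hev : ∀ᶠ t in 𝓝[Set.Ici (0:ℝ)] t₀, H t s = 0 := by
            apply eventually_nhdsWithin_of_eventually_nhds
            filter_upwards [eventually_lt_nhds hst] with t hts
            exact Set.indicator_of_notMem (fun h => absurd h.2 (not_le.2 hts)) _
          have hH0 : H t₀ s = 0 :=
            Set.indicator_of_notMem (fun h => absurd h.2 (not_le.2 hst)) _
          rw [hH0]
          exact tendsto_const_nhds.congr' (by filter_upwards [hev] with t h using h.symm)
  rw [hrw t₀ ht₀]
  apply key.congr'
  filter_upwards [eventually_mem_nhdsWithin] with t ht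
  exact (hrw t ht).symm
end

section
/- Let E be a separable Banach space, let (S_t)_{t≥0} be a C₀-semigroup on E, let (Ω, 𝓕, (𝓕_t)_{t≥0}, ℙ) be a filtered probability space, and let X : ℝ₊ × Ω → E be a progressively measurable process such that ℙ(∫₀ᵗ ‖X_s‖ ds < ∞) = 1 for all t ≥ 0. Then the process Y defined pathwise by the Bochner integral Y_t = ∫₀ᵗ S_{t−s} X_s ds is adapted to (𝓕_t)_{t≥0} and has ℙ-almost surely continuous sample paths t ↦ Y_t. -/
open Filter Topology MeasureTheory
open scoped NNReal

lemma sg_bound {E : Type*} [NormedAddCommGroup E] [NormedSpace ℝ E] [CompleteSpace E]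
    (S : ℝ → E →L[ℝ] E)
    (hS0 : S 0 = ContinuousLinearMap.id ℝ E)
    (hSadd : ∀ s t : ℝ, 0 ≤ s → 0 ≤ t → S (s + t) = (S s).comp (S t))
    (hScont : ∀ x : E, Tendsto (fun t : ℝ => S t x) (𝓝[>] (0 : ℝ)) (𝓝 x))
    (T : ℝ) : ∃ M : ℝ, 0 < M ∧ ∀ r : ℝ, r ≤ T → ‖S (max r 0)‖ ≤ M := by
  set T' : ℝ := max T 0 with hT'
  have hpt : ∀ x : E, ∃ C : ℝ, ∀ i : Set.Icc (0:ℝ) T', ‖S i x‖ ≤ C := by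
    intro x
    have h2 : ∀ᶠ r in 𝓝[>] (0:ℝ), S r x ∈ Metric.ball x 1 :=
      hScont x (Metric.ball_mem_nhds x one_pos)
    rw [eventually_iff, mem_nhdsGT_iff_exists_Ioo_subset] at h2
    obtain ⟨u, hu0, hu⟩ := h2
    have hu0' : (0:ℝ) < u := hu0
    set δ : ℝ := u / 2 with hδ
    have hδpos : 0 < δ := by positivity
    have hbase : ∀ r : ℝ, 0 ≤ r → r ≤ δ → ‖S r x‖ ≤ ‖x‖ + 1 := by
      intro r hr0 hrδ
      rcases eq_or_lt_of_le hr0 with h | h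
      · rw [← h, hS0]
        simp
      · have : S r x ∈ Metric.ball x 1 := hu ⟨h, lt_of_le_of_lt hrδ (by linarith)⟩
        have hd : ‖S r x - x‖ < 1 := by
          simpa [dist_eq_norm] using this
        calc ‖S r x‖ = ‖(S r x - x) + x‖ := by rw [sub_add_cancel]
          _ ≤ ‖S r x - x‖ + ‖x‖ := norm_add_le _ _
          _ ≤ ‖x‖ + 1 := by linarith
    have key : ∀ n : ℕ, ∀ r : ℝ, 0 ≤ r →
        ‖S ((n : ℝ) * δ + r) x‖ ≤ ‖S δ‖ ^ n * ‖S r x‖ := by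
      intro n
      induction n with
      | zero => intro r hr; simp
      | succ n ih =>
        intro r hr
        have heq : ((n + 1 : ℕ) : ℝ) * δ + r = δ + ((n : ℝ) * δ + r) := by push_cast; ring
        rw [heq, hSadd δ ((n : ℝ) * δ + r) hδpos.le (by positivity)]
        calc ‖(S δ) (S ((n:ℝ) * δ + r) x)‖ ≤ ‖S δ‖ * ‖S ((n:ℝ) * δ + r) x‖ :=
              (S δ).le_opNorm _
          _ ≤ ‖S δ‖ * (‖S δ‖ ^ n * ‖S r x‖) :=
              mul_le_mul_of_nonneg_left (ih r hr) (norm_nonneg _)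
          _ = ‖S δ‖ ^ (n + 1) * ‖S r x‖ := by ring
    set N : ℕ := ⌊T' / δ⌋₊ with hN
    refine ⟨(max 1 ‖S δ‖) ^ N * (‖x‖ + 1), ?_⟩
    rintro ⟨t, ht0, htT⟩
    set n : ℕ := ⌊t / δ⌋₊ with hn
    set r : ℝ := t - (n : ℝ) * δ with hrdef
    have hr0 : 0 ≤ r := by
      have := Nat.floor_le (div_nonneg ht0 hδpos.le)
      have : (n : ℝ) * δ ≤ t := by
        rw [hn]; exact (le_div_iff₀ hδpos).mp this
      simp [hrdef]; linarith
    have hrδ : r ≤ δ := by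
      have h1 : t / δ < (n : ℝ) + 1 := by rw [hn]; exact Nat.lt_floor_add_one _
      have : t < ((n : ℝ) + 1) * δ := (div_lt_iff₀ hδpos).mp h1
      nlinarith
    have hnN : n ≤ N := by
      rw [hn, hN]
      exact Nat.floor_mono (by gcongr)
    have ht : t = (n : ℝ) * δ + r := by rw [hrdef]; ring
    calc ‖S t x‖ = ‖S ((n : ℝ) * δ + r) x‖ := by rw [← ht]
      _ ≤ ‖S δ‖ ^ n * ‖S r x‖ := key n r hr0
      _ ≤ (max 1 ‖S δ‖) ^ n * (‖x‖ + 1) := by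
          apply mul_le_mul (pow_le_pow_left₀ (norm_nonneg _) (le_max_right _ _) n)
            (hbase r hr0 hrδ) (norm_nonneg _) (by positivity)
      _ ≤ (max 1 ‖S δ‖) ^ N * (‖x‖ + 1) := by
          apply mul_le_mul_of_nonneg_right
            (pow_le_pow_right₀ (le_max_left _ _) hnN) (by positivity)
  obtain ⟨C', hC'⟩ := banach_steinhaus (g := fun i : Set.Icc (0:ℝ) T' => S i) hpt
  refine ⟨max C' 1, lt_of_lt_of_le one_pos (le_max_right _ _), fun r hr => ?_⟩
  have hmem : max r 0 ∈ Set.Icc (0:ℝ) T' := by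
    constructor
    · exact le_max_right _ _
    · exact max_le_max hr le_rfl
  exact le_trans (hC' ⟨max r 0, hmem⟩) (le_max_left _ _)

lemma sg_cont {E : Type*} [NormedAddCommGroup E] [NormedSpace ℝ E] [CompleteSpace E]
    (S : ℝ → E →L[ℝ] E)
    (hS0 : S 0 = ContinuousLinearMap.id ℝ E)
    (hSadd : ∀ s t : ℝ, 0 ≤ s → 0 ≤ t → S (s + t) = (S s).comp (S t))
    (hScont : ∀ x : E, Tendsto (fun t : ℝ => S t x) (𝓝[>] (0 : ℝ)) (𝓝 x))
    (x : E) : Continuous fun r : ℝ => S (max r 0) x := by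
  rw [continuous_iff_continuousAt]
  intro r₀
  rcases lt_or_ge r₀ 0 with h | h
  · have hev : (fun r : ℝ => S (max r 0) x) =ᶠ[𝓝 r₀] fun _ => x := by
      filter_upwards [Iio_mem_nhds h] with r hr
      rw [max_eq_right (le_of_lt hr), hS0]; rfl
    exact hev.continuousAt
  · have hmax : max r₀ 0 = r₀ := max_eq_left h
    rw [ContinuousAt]
    simp only [hmax]
    rw [← nhdsLT_sup_nhdsGE r₀, tendsto_sup]
    constructor
    · -- left limit
      rcases eq_or_lt_of_le h with h0 | h0
      · have hev : (fun _ : ℝ => S r₀ x) =ᶠ[𝓝[<] r₀] fun r : ℝ => S (max r 0) x := by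
          filter_upwards [self_mem_nhdsWithin] with r hr
          have hr0 : r < 0 := by rw [← h0] at hr; exact hr
          rw [max_eq_right hr0.le, ← h0, hS0]
        exact Tendsto.congr' hev tendsto_const_nhds
      · obtain ⟨M, hM, hMb⟩ := sg_bound S hS0 hSadd hScont r₀
        have haux : Tendsto (fun r : ℝ => S (r₀ - r) x) (𝓝[<] r₀) (𝓝 x) := by
          apply (hScont x).comp
          apply tendsto_nhdsWithin_of_tendsto_nhds_of_eventually_within
          · have h1 : Tendsto (fun r : ℝ => r₀ - r) (𝓝 r₀) (𝓝 (r₀ - r₀)) :=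
              tendsto_const_nhds.sub tendsto_id
            simpa using h1.mono_left nhdsWithin_le_nhds
          · filter_upwards [self_mem_nhdsWithin] with r hr
            exact sub_pos.2 (Set.mem_Iio.mp hr)
        rw [← tendsto_sub_nhds_zero_iff]
        apply squeeze_zero_norm' (a := fun r : ℝ => M * ‖S (r₀ - r) x - x‖)
        · filter_upwards [Ioo_mem_nhdsLT_of_mem (Set.mem_Ioc.2 ⟨h0, le_rfl⟩)] with r hr
          have hr0 : (0:ℝ) < r := hr.1
          have hrr : r < r₀ := hr.2
          rw [max_eq_left hr0.le]
          have heq : S r₀ x = S r (S (r₀ - r) x) := by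
            have hsum : r + (r₀ - r) = r₀ := by ring
            conv_lhs => rw [← hsum]
            rw [hSadd r (r₀ - r) hr0.le (by linarith), ContinuousLinearMap.comp_apply]
          rw [heq]
          calc ‖S r x - S r (S (r₀ - r) x)‖ = ‖S r (x - S (r₀ - r) x)‖ := by rw [map_sub]
            _ ≤ ‖S r‖ * ‖x - S (r₀ - r) x‖ := (S r).le_opNorm _
            _ ≤ M * ‖S (r₀ - r) x - x‖ := by
                rw [norm_sub_rev]
                apply mul_le_mul_of_nonneg_right ?_ (norm_nonneg _)
                have hb := hMb r hrr.le
                rwa [max_eq_left hr0.le] at hb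
        · have h1 : Tendsto (fun r : ℝ => ‖S (r₀ - r) x - x‖) (𝓝[<] r₀) (𝓝 0) := by
            have h2 := (haux.sub_const x).norm
            simpa using h2
          simpa using h1.const_mul M
    · -- right limit on 𝓝[≥]
      rw [show Set.Ici r₀ = insert r₀ (Set.Ioi r₀) from (Set.Ioi_insert (a := r₀)).symm,
        nhdsWithin_insert, tendsto_sup]
      refine ⟨by simpa [hmax] using tendsto_pure_nhds (fun r : ℝ => S (max r 0) x) r₀, ?_⟩
      have haux : Tendsto (fun r : ℝ => r - r₀) (𝓝[>] r₀) (𝓝[>] (0:ℝ)) := by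
        apply tendsto_nhdsWithin_of_tendsto_nhds_of_eventually_within
        · have h1 : Tendsto (fun r : ℝ => r - r₀) (𝓝 r₀) (𝓝 (r₀ - r₀)) :=
            tendsto_id.sub tendsto_const_nhds
          simpa using h1.mono_left nhdsWithin_le_nhds
        · filter_upwards [self_mem_nhdsWithin] with r hr
          exact sub_pos.2 (Set.mem_Ioi.mp hr)
      have h2 : Tendsto (fun r : ℝ => S (r - r₀) (S r₀ x)) (𝓝[>] r₀) (𝓝 (S r₀ x)) :=
        (hScont (S r₀ x)).comp haux
      apply Tendsto.congr' ?_ h2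
      filter_upwards [self_mem_nhdsWithin] with r hr
      have hrr : r₀ < r := Set.mem_Ioi.mp hr
      have hsum : (r - r₀) + r₀ = r := by ring
      rw [max_eq_left (by linarith : (0:ℝ) ≤ r)]
      conv_rhs => rw [← hsum]
      rw [hSadd (r - r₀) r₀ (by linarith) h, ContinuousLinearMap.comp_apply]

lemma sg_Kcont {E : Type*} [NormedAddCommGroup E] [NormedSpace ℝ E] [CompleteSpace E]
    (S : ℝ → E →L[ℝ] E)
    (hS0 : S 0 = ContinuousLinearMap.id ℝ E)
    (hSadd : ∀ s t : ℝ, 0 ≤ s → 0 ≤ t → S (s + t) = (S s).comp (S t))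
    (hScont : ∀ x : E, Tendsto (fun t : ℝ => S t x) (𝓝[>] (0 : ℝ)) (𝓝 x)) :
    Continuous fun p : ℝ × E => S (max p.1 0) p.2 := by
  rw [continuous_iff_continuousAt]
  rintro ⟨r₀, x₀⟩
  obtain ⟨M, hM, hMb⟩ := sg_bound S hS0 hSadd hScont (r₀ + 1)
  rw [ContinuousAt, ← tendsto_sub_nhds_zero_iff]
  have hdec : (fun p : ℝ × E => S (max p.1 0) p.2 - S (max r₀ 0) x₀)
      = fun p : ℝ × E =>
        (S (max p.1 0) (p.2 - x₀)) + (S (max p.1 0) x₀ - S (max r₀ 0) x₀) := by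
    funext p; rw [map_sub]; abel
  rw [hdec]
  have h1 : Tendsto (fun p : ℝ × E => S (max p.1 0) (p.2 - x₀)) (𝓝 (r₀, x₀)) (𝓝 0) := by
    apply squeeze_zero_norm' (a := fun p : ℝ × E => M * ‖p.2 - x₀‖)
    · filter_upwards [prod_mem_nhds (Iio_mem_nhds (lt_add_one r₀)) Filter.univ_mem] with p hp
      calc ‖S (max p.1 0) (p.2 - x₀)‖ ≤ ‖S (max p.1 0)‖ * ‖p.2 - x₀‖ := (S (max p.1 0)).le_opNorm _
        _ ≤ M * ‖p.2 - x₀‖ := mul_le_mul_of_nonneg_right (hMb p.1 hp.1.le) (norm_nonneg _)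
    · have h3 : Tendsto (fun p : ℝ × E => ‖p.2 - x₀‖) (𝓝 (r₀, x₀)) (𝓝 ‖x₀ - x₀‖) :=
        ((continuous_snd.sub continuous_const).norm).tendsto (r₀, x₀)
      have h4 : Tendsto (fun p : ℝ × E => M * ‖p.2 - x₀‖) (𝓝 (r₀, x₀)) (𝓝 (M * ‖x₀ - x₀‖)) :=
        h3.const_mul M
      simpa using h4
  have h2 : Tendsto (fun p : ℝ × E => S (max p.1 0) x₀ - S (max r₀ 0) x₀) (𝓝 (r₀, x₀)) (𝓝 0) := by
    have hc := (sg_cont S hS0 hSadd hScont x₀).comp (continuous_fst : Continuous fun p : ℝ × E => p.1)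
    have h5 := (hc.sub (continuous_const (y := S (max r₀ 0) x₀))).tendsto (r₀, x₀)
    rw [show (0:E) = S (max r₀ 0) x₀ - S (max r₀ 0) x₀ from (sub_self _).symm]
    exact h5
  simpa using h1.add h2

/-- **Regularity of the drift convolution.**
Let `E` be a separable Banach space, let `(S t)_{t ≥ 0}` be a C₀-semigroup on `E`, let
`(Ω, 𝓕, (𝓕ₜ), ℙ)` be a filtered probability space and let `X : ℝ₊ × Ω → E` be a progressively
measurable process with `ℙ(∫₀ᵗ ‖X s‖ ds < ∞) = 1` for all `t ≥ 0`. Then the process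
`Y t = ∫₀ᵗ S (t - s) (X s) ds` (defined pathwise as a Bochner integral) is adapted and has
`ℙ`-almost surely continuous sample paths. -/
theorem convolution_process_adapted_continuous
    {E : Type*} [NormedAddCommGroup E] [NormedSpace ℝ E] [CompleteSpace E]
    [TopologicalSpace.SeparableSpace E]
    (S : ℝ → E →L[ℝ] E)
    (hS0 : S 0 = ContinuousLinearMap.id ℝ E)
    (hSadd : ∀ s t : ℝ, 0 ≤ s → 0 ≤ t → S (s + t) = (S s).comp (S t))
    (hScont : ∀ x : E, Tendsto (fun t : ℝ => S t x) (𝓝[>] (0 : ℝ)) (𝓝 x))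
    {Ω : Type*} {m0 : MeasurableSpace Ω} (μ : Measure Ω) [IsProbabilityMeasure μ]
    (F : Filtration ℝ≥0 m0)
    (X : ℝ≥0 → Ω → E)
    (hprog : IsStronglyProgressive F X)
    (hint : ∀ t : ℝ≥0, ∀ᵐ ω ∂μ,
      (∫⁻ s in Set.Icc (0 : ℝ) (t : ℝ), (‖X (Real.toNNReal s) ω‖₊ : ENNReal)) < ⊤) :
    StronglyAdapted F
      (fun (t : ℝ≥0) (ω : Ω) =>
        ∫ s in (0:ℝ)..(t : ℝ), S ((t : ℝ) - s) (X (Real.toNNReal s) ω)) ∧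
    ∀ᵐ ω ∂μ, Continuous
      (fun t : ℝ≥0 =>
        ∫ s in (0:ℝ)..(t : ℝ), S ((t : ℝ) - s) (X (Real.toNNReal s) ω)) := by
  have hK : Continuous fun p : ℝ × E => S (max p.1 0) p.2 := sg_Kcont S hS0 hSadd hScont
  constructor
  · -- Adaptedness
    intro t
    have hXt := hprog t
    have hw : StronglyMeasurable[MeasurableSpace.prod inferInstance (F t)]
        (fun p : ℝ × Ω => X (min (Real.toNNReal p.1) t) p.2) := by
      have hm : @Measurable (ℝ × Ω) (↥(Set.Iic t) × Ω)
          (MeasurableSpace.prod inferInstance (F t))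
          (MeasurableSpace.prod Subtype.instMeasurableSpace (F t))
          (fun p => (⟨min (Real.toNNReal p.1) t, Set.mem_Iic.2 (min_le_right _ _)⟩, p.2)) := by
        apply Measurable.prodMk
        · apply Measurable.subtype_mk
          exact (measurable_real_toNNReal.comp (@measurable_fst ℝ Ω _ (F t))).min
            measurable_const
        · exact @measurable_snd ℝ Ω _ (F t)
      exact StronglyMeasurable.comp_measurable hXt hm
    have ha : StronglyMeasurable[MeasurableSpace.prod inferInstance (F t)]
        (fun p : ℝ × Ω => (t : ℝ) - p.1) := by
      exact ((continuous_const.sub continuous_id).stronglyMeasurable).comp_measurable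
        (@measurable_fst ℝ Ω _ (F t))
    have hv : StronglyMeasurable[MeasurableSpace.prod inferInstance (F t)]
        (fun p : ℝ × Ω => S (max ((t:ℝ) - p.1) 0) (X (min (Real.toNNReal p.1) t) p.2)) :=
      hK.comp_stronglyMeasurable (ha.prodMk hw)
    have hI : StronglyMeasurable[F t] fun ω =>
        ∫ s, (fun p : ℝ × Ω => S (max ((t:ℝ) - p.1) 0) (X (min (Real.toNNReal p.1) t) p.2)) (s, ω)
          ∂(volume.restrict (Set.Ioc (0:ℝ) (t:ℝ))) :=
      @MeasureTheory.StronglyMeasurable.integral_prod_left' ℝ Ω E _ (F t)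
        (volume.restrict (Set.Ioc (0:ℝ) (t:ℝ))) _ _ _ _ hv
    have heq : (fun ω => ∫ s in (0:ℝ)..(t:ℝ), S ((t:ℝ) - s) (X (Real.toNNReal s) ω))
        = fun ω => ∫ s in Set.Ioc (0:ℝ) (t:ℝ),
            S (max ((t:ℝ) - s) 0) (X (min (Real.toNNReal s) t) ω) := by
      funext ω
      rw [intervalIntegral.integral_of_le t.coe_nonneg]
      apply setIntegral_congr_fun measurableSet_Ioc
      intro s hs
      have hs0 : (0:ℝ) < s := hs.1
      have hst : s ≤ (t:ℝ) := hs.2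
      dsimp only
      rw [max_eq_left (by linarith : (0:ℝ) ≤ (t:ℝ) - s),
        min_eq_left (Real.toNNReal_le_iff_le_coe.2 hst)]
    dsimp only
    rw [heq]
    exact hI
  · -- a.s. continuity of sample paths
    have hae : ∀ᵐ ω ∂μ, ∀ n : ℕ,
        (∫⁻ s in Set.Icc (0:ℝ) (((n:ℝ≥0)):ℝ), (‖X (Real.toNNReal s) ω‖₊ : ENNReal)) < ⊤ := by
      rw [ae_all_iff]; intro n; exact hint (n : ℝ≥0)
    filter_upwards [hae] with ω hω
    rw [continuous_iff_continuousAt]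
    intro t₀
    set T : ℝ≥0 := t₀ + 1 with hT
    obtain ⟨M, hM, hMb⟩ := sg_bound S hS0 hSadd hScont (T:ℝ)
    set u : ℝ → E := fun s => X (min (Real.toNNReal s) T) ω with hu
    have hu_sm : StronglyMeasurable u := by
      have h1 : StronglyMeasurable fun s : Set.Iic T => X s ω :=
        (hprog T).comp_measurable (measurable_id.prodMk measurable_const)
      have h2 : Measurable fun s : ℝ =>
          (⟨min (Real.toNNReal s) T, Set.mem_Iic.2 (min_le_right _ _)⟩ : Set.Iic T) :=
        (measurable_real_toNNReal.min measurable_const).subtype_mk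
      exact h1.comp_measurable h2
    set n : ℕ := ⌈(T:ℝ)⌉₊ with hn
    have hTn : (T:ℝ) ≤ (((n:ℝ≥0)):ℝ) := by push_cast; exact Nat.le_ceil _
    have hu_int : IntegrableOn u (Set.Ioc (0:ℝ) (T:ℝ)) := by
      constructor
      · exact hu_sm.aestronglyMeasurable
      · show (∫⁻ s in Set.Ioc (0:ℝ) (T:ℝ), (‖u s‖₊ : ENNReal)) < ⊤
        calc (∫⁻ s in Set.Ioc (0:ℝ) (T:ℝ), (‖u s‖₊ : ENNReal))
            = ∫⁻ s in Set.Ioc (0:ℝ) (T:ℝ), (‖X (Real.toNNReal s) ω‖₊ : ENNReal) := by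
              apply setLIntegral_congr_fun measurableSet_Ioc
              intro s hs
              rw [hu]
              simp only []
              rw [min_eq_left (Real.toNNReal_le_iff_le_coe.2 hs.2)]
          _ ≤ ∫⁻ s in Set.Icc (0:ℝ) (((n:ℝ≥0)):ℝ), (‖X (Real.toNNReal s) ω‖₊ : ENNReal) :=
              lintegral_mono_set (Set.Ioc_subset_Icc_self.trans (Set.Icc_subset_Icc_right hTn))
          _ < ⊤ := hω n
    set G : ℝ≥0 → ℝ → E := fun t s =>
      Set.indicator (Set.Iic (t:ℝ)) (fun s' => S (max ((t:ℝ) - s') 0) (u s')) s with hG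
    have hYeq : ∀ t : ℝ≥0, t ≤ T →
        (∫ s in (0:ℝ)..(t:ℝ), S ((t:ℝ) - s) (X (Real.toNNReal s) ω))
          = ∫ s in Set.Ioc (0:ℝ) (T:ℝ), G t s := by
      intro t ht
      rw [intervalIntegral.integral_of_le t.coe_nonneg]
      rw [show (∫ s in Set.Ioc (0:ℝ) (T:ℝ), G t s)
          = ∫ s in Set.Ioc (0:ℝ) (T:ℝ) ∩ Set.Iic (t:ℝ),
              S (max ((t:ℝ) - s) 0) (u s) from setIntegral_indicator measurableSet_Iic]
      rw [Set.Ioc_inter_Iic, min_eq_right (NNReal.coe_le_coe.2 ht)]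
      apply setIntegral_congr_fun measurableSet_Ioc
      intro s hs
      have h1 : (0:ℝ) < s := hs.1
      have h2 : s ≤ (t:ℝ) := hs.2
      have h3 : s ≤ (T:ℝ) := h2.trans (NNReal.coe_le_coe.2 ht)
      dsimp only
      rw [max_eq_left (by linarith : (0:ℝ) ≤ (t:ℝ) - s)]
      simp only [hu]
      rw [min_eq_left (Real.toNNReal_le_iff_le_coe.2 h3)]
    have hmain : Tendsto (fun t : ℝ≥0 => ∫ s in Set.Ioc (0:ℝ) (T:ℝ), G t s) (𝓝 t₀)
        (𝓝 (∫ s in Set.Ioc (0:ℝ) (T:ℝ), G t₀ s)) := by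
      apply tendsto_integral_filter_of_dominated_convergence (bound := fun s => M * ‖u s‖)
      · apply Filter.Eventually.of_forall
        intro t
        apply AEStronglyMeasurable.indicator ?_ measurableSet_Iic
        apply StronglyMeasurable.aestronglyMeasurable
        exact hK.comp_stronglyMeasurable
          (((continuous_const.sub continuous_id).stronglyMeasurable).prodMk hu_sm)
      · filter_upwards [Iio_mem_nhds (lt_add_one t₀)] with t ht
        filter_upwards [ae_restrict_mem measurableSet_Ioc] with s hs
        have htT : (t:ℝ) < (T:ℝ) := NNReal.coe_lt_coe.2 ht
        by_cases hst : s ∈ Set.Iic (t:ℝ)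
        · rw [hG]
          simp only [Set.indicator_of_mem hst]
          calc ‖S (max ((t:ℝ) - s) 0) (u s)‖ ≤ ‖S (max ((t:ℝ) - s) 0)‖ * ‖u s‖ :=
              (S _).le_opNorm _
            _ ≤ M * ‖u s‖ := mul_le_mul_of_nonneg_right
                (hMb _ (by linarith [hs.1])) (norm_nonneg _)
        · rw [hG]
          simp only [Set.indicator_of_notMem hst]
          rw [norm_zero]
          positivity
      · exact hu_int.norm.const_mul M
      · have hane : ∀ᵐ s ∂(volume.restrict (Set.Ioc (0:ℝ) (T:ℝ))), s ≠ (t₀:ℝ) := by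
          apply ae_restrict_of_ae
          rw [ae_iff]
          simp only [ne_eq, not_not]
          rw [show {s : ℝ | s = (t₀:ℝ)} = {(t₀:ℝ)} from Set.setOf_eq_eq_singleton]
          exact Real.volume_singleton
        filter_upwards [hane] with s hst₀
        rcases lt_or_gt_of_ne hst₀ with hlt | hgt
        · have hev2 : ∀ᶠ t : ℝ≥0 in 𝓝 t₀, s < (t:ℝ) :=
            (NNReal.continuous_coe.tendsto t₀).eventually (eventually_gt_nhds hlt)
          have hcont : Tendsto (fun t : ℝ≥0 => S (max ((t:ℝ) - s) 0) (u s)) (𝓝 t₀)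
              (𝓝 (S (max ((t₀:ℝ) - s) 0) (u s))) := by
            have hc : Continuous fun t : ℝ≥0 => S (max ((t:ℝ) - s) 0) (u s) :=
              hK.comp ((NNReal.continuous_coe.sub continuous_const).prodMk continuous_const)
            exact hc.tendsto t₀
          have hval : G t₀ s = S (max ((t₀:ℝ) - s) 0) (u s) := by
            simp only [hG]
            exact Set.indicator_of_mem (Set.mem_Iic.2 hlt.le) _
          rw [hval]
          apply Tendsto.congr' ?_ hcont
          filter_upwards [hev2] with t ht
          simp only [hG]
          exact (Set.indicator_of_mem (Set.mem_Iic.2 ht.le)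
            (fun s' => S (max ((t:ℝ) - s') 0) (u s'))).symm
        · have hev2 : ∀ᶠ t : ℝ≥0 in 𝓝 t₀, (t:ℝ) < s :=
            (NNReal.continuous_coe.tendsto t₀).eventually (eventually_lt_nhds hgt)
          have hval : G t₀ s = 0 := by
            simp only [hG]
            exact Set.indicator_of_notMem (by simpa using hgt.not_ge) _
          rw [hval]
          apply Tendsto.congr' ?_ tendsto_const_nhds
          filter_upwards [hev2] with t ht
          simp only [hG]
          exact (Set.indicator_of_notMem (by simpa using ht.not_ge) _).symm
    have ht₀T : t₀ ≤ T := le_of_lt (lt_add_one t₀)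
    have hfinal := hmain
    rw [← hYeq t₀ ht₀T] at hfinal
    refine Tendsto.congr' ?_ hfinal
    filter_upwards [Iio_mem_nhds (lt_add_one t₀)] with t ht
    exact (hYeq t ht.le).symm
end

section
/- Let H be a separable Hilbert space, let U ⊆ H be open, let V ⊆ ℝ^m be open, let ζ₁, …, ζ_m ∈ H, and write ⟨ζ, g⟩ := (⟨ζ₁, g⟩, …, ⟨ζ_m, g⟩) ∈ ℝ^m for g ∈ H. Let M ⊆ H, let φ : ℝ^m → H be twice continuously differentiable with bounded derivatives, suppose φ maps V bijectively onto U ∩ M with inverse given by φ(⟨ζ, g⟩) = g for all g ∈ U ∩ M, and suppose Dφ(y) is injective for all y ∈ V. Let σ : H → H be continuously differentiable and suppose the tangency condition σ(g) = Dφ(⟨ζ, g⟩)(⟨ζ, σ(g)⟩) holds for all g ∈ U ∩ M. Then for every h ∈ U ∩ M, with y = ⟨ζ, h⟩, one has the decomposition Dσ(h)σ(h) = Dφ(y)(⟨ζ, Dσ(h)σ(h)⟩) + D²φ(y)(⟨ζ, σ(h)⟩, ⟨ζ, σ(h)⟩). -/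
open Set

/-- **Decomposition of `Dσ(h)σ(h)` along a tangential parametrization.**
Let `H` be a separable Hilbert space, `U ⊆ H` open, `V ⊆ ℝ^m` open, `ζ₁, …, ζ_m ∈ H`, and
write `⟨ζ, g⟩ := (⟨ζ₁, g⟩, …, ⟨ζ_m, g⟩) ∈ ℝ^m`. Let `M ⊆ H`, let `φ : ℝ^m → H` be twice
continuously differentiable with bounded (first and second) derivatives, mapping `V`
bijectively onto `U ∩ M` with inverse `g ↦ ⟨ζ, g⟩` (i.e. `φ(⟨ζ, g⟩) = g` on `U ∩ M`) and
with `Dφ(y)` injective for all `y ∈ V`. Let `σ : H → H` be continuously differentiable with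
`σ(g) = Dφ(⟨ζ, g⟩)(⟨ζ, σ(g)⟩)` for all `g ∈ U ∩ M`. Then for every `h ∈ U ∩ M`, with
`y = ⟨ζ, h⟩`, one has
`Dσ(h)σ(h) = Dφ(y)(⟨ζ, Dσ(h)σ(h)⟩) + D²φ(y)(⟨ζ, σ(h)⟩, ⟨ζ, σ(h)⟩)`. -/
theorem tangential_decomposition
    {H : Type*} [NormedAddCommGroup H] [InnerProductSpace ℝ H] [CompleteSpace H]
    [TopologicalSpace.SeparableSpace H]
    {m : ℕ} (U : Set H) (hU : IsOpen U) (V : Set (Fin m → ℝ)) (hV : IsOpen V)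
    (ζ : Fin m → H) (M : Set H)
    (φ : (Fin m → ℝ) → H) (hφ : ContDiff ℝ 2 φ)
    (hφ' : ∃ C : ℝ, ∀ y : Fin m → ℝ, ‖fderiv ℝ φ y‖ ≤ C)
    (hφ'' : ∃ C : ℝ, ∀ y : Fin m → ℝ, ‖fderiv ℝ (fderiv ℝ φ) y‖ ≤ C)
    (hbij : Set.BijOn φ V (U ∩ M))
    (hinv : ∀ g ∈ U ∩ M, φ (fun i => (inner ℝ (ζ i) g : ℝ)) = g)
    (hDinj : ∀ y ∈ V, Function.Injective (fderiv ℝ φ y))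
    (σ : H → H) (hσ : ContDiff ℝ 1 σ)
    (htan : ∀ g ∈ U ∩ M,
      σ g = fderiv ℝ φ (fun i => (inner ℝ (ζ i) g : ℝ)) (fun i => (inner ℝ (ζ i) (σ g) : ℝ)))
    (h : H) (hh : h ∈ U ∩ M) :
    fderiv ℝ σ h (σ h) =
      fderiv ℝ φ (fun i => (inner ℝ (ζ i) h : ℝ))
          (fun i => (inner ℝ (ζ i) (fderiv ℝ σ h (σ h)) : ℝ)) +
        fderiv ℝ (fderiv ℝ φ) (fun i => (inner ℝ (ζ i) h : ℝ))
          (fun i => (inner ℝ (ζ i) (σ h) : ℝ)) (fun i => (inner ℝ (ζ i) (σ h) : ℝ)) := by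
  classical
  set π : H →L[ℝ] (Fin m → ℝ) := ContinuousLinearMap.pi (fun i => innerSL ℝ (ζ i)) with hπdef
  have hπapp : ∀ g : H, (fun i => (inner ℝ (ζ i) g : ℝ)) = π g := fun g => rfl
  -- basic differentiability
  have hφd : Differentiable ℝ φ := hφ.differentiable (by norm_num)
  have hσd : Differentiable ℝ σ := hσ.differentiable (by norm_num)
  set ψ : (Fin m → ℝ) → (Fin m → ℝ) := fun y => π (φ y) with hψdef
  have hψc : ContDiff ℝ 2 ψ := π.contDiff.comp hφ
  have hψd : Differentiable ℝ ψ := hψc.differentiable (by norm_num)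
  have hmem : ∀ y ∈ V, φ y ∈ U ∩ M := fun y hy => hbij.mapsTo hy
  have hφψ : ∀ y ∈ V, φ (ψ y) = φ y := by
    intro y hy
    have := hinv (φ y) (hmem y hy)
    rwa [hπapp (φ y)] at this
  obtain ⟨y', hy'V, hy'φ⟩ := hbij.surjOn hh
  -- chain rule identity at y'
  have hDψ : fderiv ℝ ψ y' = π.comp (fderiv ℝ φ y') := by
    have : ψ = π ∘ φ := rfl
    rw [this, fderiv_comp y' (π.differentiableAt) (hφd y'), π.fderiv]
  have hcomp : (fderiv ℝ φ (ψ y')).comp (fderiv ℝ ψ y') = fderiv ℝ φ y' := by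
    have h1 : (fun y => φ (ψ y)) =ᶠ[nhds y'] φ := by
      filter_upwards [hV.mem_nhds hy'V] with y hy using hφψ y hy
    have h2 : fderiv ℝ (fun y => φ (ψ y)) y' = fderiv ℝ φ y' := h1.fderiv_eq
    have h3 : fderiv ℝ (φ ∘ ψ) y' = (fderiv ℝ φ (ψ y')).comp (fderiv ℝ ψ y') :=
      fderiv_comp y' (hφd _) (hψd y')
    rw [← h2]; exact h3.symm
  have hinjψ : Function.Injective (fderiv ℝ ψ y') := by
    intro v w hvw
    apply hDinj y' hy'V
    have : (fderiv ℝ φ (ψ y')).comp (fderiv ℝ ψ y') v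
         = (fderiv ℝ φ (ψ y')).comp (fderiv ℝ ψ y') w := by
      simp only [ContinuousLinearMap.comp_apply, hvw]
    rwa [hcomp] at this
  have hsurjψ : Function.Surjective (fderiv ℝ ψ y') :=
    (LinearMap.injective_iff_surjective (f := (fderiv ℝ ψ y' : (Fin m → ℝ) →ₗ[ℝ] (Fin m → ℝ)))).mp hinjψ
  let e : (Fin m → ℝ) ≃L[ℝ] (Fin m → ℝ) :=
    (LinearEquiv.ofBijective (fderiv ℝ ψ y' : (Fin m → ℝ) →ₗ[ℝ] (Fin m → ℝ))
      ⟨hinjψ, hsurjψ⟩).toContinuousLinearEquiv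
  have he : (e : (Fin m → ℝ) →L[ℝ] (Fin m → ℝ)) = fderiv ℝ ψ y' := by
    ext v; rfl
  have hstrict : HasStrictFDerivAt ψ (e : (Fin m → ℝ) →L[ℝ] (Fin m → ℝ)) y' := by
    rw [he]
    exact (hψc.contDiffAt).hasStrictFDerivAt (by norm_num)
  have hmap : Filter.map ψ (nhds y') = nhds (ψ y') := hstrict.map_nhds_eq_of_equiv
  have hy0 : ψ y' = π h := by rw [hψdef]; simp [hy'φ]
  -- the image of U ∩ M under π is a neighborhood of π h
  have hS : π '' (U ∩ M) ∈ nhds (π h) := by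
    rw [← hy0, ← hmap, Filter.mem_map]
    exact Filter.mem_of_superset (hV.mem_nhds hy'V) (fun y hy => ⟨φ y, hmem y hy, rfl⟩)
  -- tangency identity on that neighborhood
  have hid : ∀ y ∈ π '' (U ∩ M), σ (φ y) = fderiv ℝ φ y (π (σ (φ y))) := by
    rintro y ⟨g, hg, rfl⟩
    have h1 : φ (π g) = g := by rw [← hπapp g]; exact hinv g hg
    rw [h1]
    have := htan g hg
    rwa [hπapp g, hπapp (σ g)] at this
  have hφπh : φ (π h) = h := by rw [← hπapp h]; exact hinv h hh
  have htanh : σ h = fderiv ℝ φ (π h) (π (σ h)) := by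
    have := htan h hh
    rwa [hπapp h, hπapp (σ h)] at this
  -- differentiate the identity at π h
  have heq : (fun y => fderiv ℝ φ y (π (σ (φ y)))) =ᶠ[nhds (π h)] (fun y => σ (φ y)) := by
    filter_upwards [hS] with y hy using (hid y hy).symm
  have hfeq := heq.fderiv_eq (𝕜 := ℝ)
  -- compute RHS derivative (σ ∘ φ)
  have hBh : HasFDerivAt (fun y => σ (φ y))
      ((fderiv ℝ σ h).comp (fderiv ℝ φ (π h))) (π h) := by
    have h1 : HasFDerivAt φ (fderiv ℝ φ (π h)) (π h) := (hφd (π h)).hasFDerivAt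
    have h2 : HasFDerivAt σ (fderiv ℝ σ h) (φ (π h)) := by
      rw [hφπh]; exact (hσd h).hasFDerivAt
    exact h2.comp (π h) h1
  -- derivative of u : y ↦ π (σ (φ y))
  have huh : HasFDerivAt (fun y => π (σ (φ y)))
      (π.comp ((fderiv ℝ σ h).comp (fderiv ℝ φ (π h)))) (π h) :=
    (π.hasFDerivAt).comp (π h) hBh
  have hud : DifferentiableAt ℝ (fun y => π (σ (φ y))) (π h) := huh.differentiableAt
  have hcd : DifferentiableAt ℝ (fderiv ℝ φ) (π h) :=
    ((hφ.fderiv_right (m := 1) (by norm_num)).differentiable (by norm_num)) (π h)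
  have hA : fderiv ℝ (fun y => fderiv ℝ φ y (π (σ (φ y)))) (π h)
      = (fderiv ℝ φ (π h)).comp (fderiv ℝ (fun y => π (σ (φ y))) (π h))
        + (fderiv ℝ (fderiv ℝ φ) (π h)).flip (π (σ (φ (π h)))) :=
    fderiv_clm_apply hcd hud
  -- evaluate both derivatives at the direction π (σ h)
  have hBval : fderiv ℝ (fun y => σ (φ y)) (π h) (π (σ h)) = fderiv ℝ σ h (σ h) := by
    rw [hBh.fderiv, ContinuousLinearMap.comp_apply, ← htanh]
  have hAval : fderiv ℝ (fun y => fderiv ℝ φ y (π (σ (φ y)))) (π h) (π (σ h))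
      = fderiv ℝ φ (π h) (π (fderiv ℝ σ h (σ h)))
        + fderiv ℝ (fderiv ℝ φ) (π h) (π (σ h)) (π (σ h)) := by
    rw [hA, huh.fderiv]
    simp only [ContinuousLinearMap.add_apply, ContinuousLinearMap.comp_apply,
      ContinuousLinearMap.flip_apply, hφπh, ← htanh]
  rw [hπapp h, hπapp (σ h), hπapp (fderiv ℝ σ h (σ h))]
  calc fderiv ℝ σ h (σ h)
      = fderiv ℝ (fun y => σ (φ y)) (π h) (π (σ h)) := hBval.symm
    _ = fderiv ℝ (fun y => fderiv ℝ φ y (π (σ (φ y)))) (π h) (π (σ h)) := by rw [hfeq]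
    _ = _ := hAval
end

section
/- Let H be a separable Hilbert space and for each j ∈ ℕ let σ^j : H → H be continuously differentiable. Suppose there is a sequence (κ_j)_{j∈ℕ} of nonnegative reals with Σ_{j∈ℕ} κ_j² < ∞ such that for every j ∈ ℕ one has ‖σ^j(h₁) − σ^j(h₂)‖ ≤ κ_j ‖h₁ − h₂‖ for all h₁, h₂ ∈ H and ‖σ^j(h)‖ ≤ κ_j (1 + ‖h‖) for all h ∈ H. Then: (1) for every h ∈ H the series Σ_{j∈ℕ} ‖Dσ^j(h) σ^j(h)‖ converges (in particular Σ_{j∈ℕ} Dσ^j(h) σ^j(h) converges absolutely in H); and (2) the mapping H → H, h ↦ Σ_{j∈ℕ} Dσ^j(h) σ^j(h) is continuous. -/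
/-- **Summability and continuity of the Stratonovich-type correction term.**
Let `H` be a separable Hilbert space and for each `j ∈ ℕ` let `σ j : H → H` be continuously
differentiable. Suppose there is a sequence `(κ j)` of nonnegative reals with `Σ κ j ² < ∞`
such that `‖σ j h₁ - σ j h₂‖ ≤ κ j * ‖h₁ - h₂‖` for all `h₁ h₂ ∈ H` and
`‖σ j h‖ ≤ κ j * (1 + ‖h‖)` for all `h ∈ H`. Then for every `h ∈ H` the series
`Σ_j ‖Dσ j (h) (σ j h)‖` converges (so `Σ_j Dσ j (h) (σ j h)` converges absolutely in `H`),
and the mapping `h ↦ Σ_j Dσ j (h) (σ j h)` is continuous. -/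
theorem correction_term_summable_and_continuous
    {H : Type*} [NormedAddCommGroup H] [InnerProductSpace ℝ H] [CompleteSpace H]
    [TopologicalSpace.SeparableSpace H]
    (σ : ℕ → H → H) (hσ : ∀ j : ℕ, ContDiff ℝ 1 (σ j))
    (κ : ℕ → ℝ) (hκ0 : ∀ j : ℕ, 0 ≤ κ j) (hκ : Summable fun j : ℕ => κ j ^ 2)
    (hLip : ∀ (j : ℕ) (h₁ h₂ : H), ‖σ j h₁ - σ j h₂‖ ≤ κ j * ‖h₁ - h₂‖)
    (hgrowth : ∀ (j : ℕ) (h : H), ‖σ j h‖ ≤ κ j * (1 + ‖h‖)) :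
    (∀ h : H, Summable fun j : ℕ => ‖fderiv ℝ (σ j) h (σ j h)‖) ∧
    Continuous fun h : H => ∑' j : ℕ, fderiv ℝ (σ j) h (σ j h) := by
  -- the derivative is bounded by κ j
  have hder : ∀ (j : ℕ) (h : H), ‖fderiv ℝ (σ j) h‖ ≤ κ j := by
    intro j h
    have hlip : LipschitzWith (κ j).toNNReal (σ j) := by
      apply LipschitzWith.of_dist_le_mul
      intro x y
      rw [Real.coe_toNNReal _ (hκ0 j)]
      simpa [dist_eq_norm] using hLip j x y
    simpa [Real.coe_toNNReal _ (hκ0 j)] using norm_fderiv_le_of_lipschitz ℝ hlip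
  -- pointwise bound
  have hbound : ∀ (j : ℕ) (h : H), ‖fderiv ℝ (σ j) h (σ j h)‖ ≤ κ j ^ 2 * (1 + ‖h‖) := by
    intro j h
    calc ‖fderiv ℝ (σ j) h (σ j h)‖ ≤ ‖fderiv ℝ (σ j) h‖ * ‖σ j h‖ :=
          (fderiv ℝ (σ j) h).le_opNorm _
      _ ≤ κ j * (κ j * (1 + ‖h‖)) := by
          apply mul_le_mul (hder j h) (hgrowth j h) (norm_nonneg _)
          exact hκ0 j
      _ = κ j ^ 2 * (1 + ‖h‖) := by ring
  -- each term is continuous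
  have hcont : ∀ j : ℕ, Continuous fun h : H => fderiv ℝ (σ j) h (σ j h) := by
    intro j
    exact ((hσ j).continuous_fderiv one_ne_zero).clm_apply (hσ j).continuous
  constructor
  · intro h
    refine Summable.of_nonneg_of_le (fun j => norm_nonneg _) (fun j => hbound j h) ?_
    exact hκ.mul_right _
  · rw [continuous_iff_continuousAt]
    intro h₀
    have hball : Metric.ball h₀ 1 ∈ nhds h₀ := Metric.ball_mem_nhds _ one_pos
    refine ContinuousOn.continuousAt ?_ hball
    refine continuousOn_tsum (fun j => (hcont j).continuousOn)
      (hκ.mul_right (1 + (‖h₀‖ + 1))) ?_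
    intro j h hh
    refine (hbound j h).trans ?_
    have hle : ‖h‖ ≤ ‖h₀‖ + 1 := by
      have := mem_ball_iff_norm.mp hh
      have h2 := norm_sub_norm_le h h₀
      linarith
    have : (0:ℝ) ≤ κ j ^ 2 := sq_nonneg _
    nlinarith
end
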